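/- arXiv:2010.09778 — 4 statements merged into one kernel-verified Lean document; each statement's English description precedes it below -/
import Mathlib

section
/- Let μ, a ∈ ℝ with a + μ ≥ 0. Then there exists a constant C > 0 (depending only on μ and a) such that x^a |J_μ(x)| ≤ C (1+x)^{a−1/2} for all x > 0. -/
open MeasureTheory Real Set

noncomputable def bc (ν : ℝ) (k : ℕ) : ℝ :=
  (-1 : ℝ) ^ k / ((k.factorial : ℝ) * Real.Gamma (ν + (k : ℝ) + 1))

lemma bc_rec (ν : ℝ) (k : ℕ) (h : 0 < ν + (k : ℝ) + 1) :
    bc ν (k + 1) = -bc ν k / (((k : ℝ) + 1) * (ν + (k : ℝ) + 1)) := by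
  unfold bc
  have hΓ : Real.Gamma (ν + ((k : ℕ) + 1 : ℕ) + 1) = (ν + k + 1) * Real.Gamma (ν + k + 1) := by
    push_cast
    rw [show ν + ((k : ℝ) + 1) + 1 = (ν + k + 1) + 1 by ring, Real.Gamma_add_one (ne_of_gt h)]
  have hΓpos : 0 < Real.Gamma (ν + (k : ℝ) + 1) := Real.Gamma_pos_of_pos h
  rw [hΓ, pow_succ, Nat.factorial_succ]
  push_cast
  field_simp

noncomputable def cs (ν : ℝ) (m : ℕ) (k : ℕ) : ℝ :=
  (((k + m).factorial : ℝ) / (k.factorial : ℝ)) * bc ν (k + m)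

lemma cs_rec (ν : ℝ) (m k : ℕ) (h : 0 < ν + ((k : ℝ) + m) + 1) :
    cs ν m (k + 1) = -cs ν m k / (((k : ℝ) + 1) * (ν + ((k : ℝ) + m) + 1)) := by
  have hb := bc_rec ν (k + m) (by push_cast; linarith)
  unfold cs
  have h1 : k + 1 + m = (k + m) + 1 := by omega
  rw [h1, hb]
  have h2 : ((k + m + 1).factorial : ℝ) = ((k : ℝ) + m + 1) * ((k + m).factorial : ℝ) := by
    rw [Nat.factorial_succ]; push_cast; ring
  have h3 : ((k + 1).factorial : ℝ) = ((k : ℝ) + 1) * (k.factorial : ℝ) := by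
    rw [Nat.factorial_succ]; push_cast; ring
  rw [h2, h3]
  have hf1 : (k.factorial : ℝ) ≠ 0 := Nat.cast_ne_zero.2 k.factorial_ne_zero
  have hf2 : ((k + m).factorial : ℝ) ≠ 0 := Nat.cast_ne_zero.2 (k + m).factorial_ne_zero
  have h4 : ((k : ℝ) + m + 1) ≠ 0 := by positivity
  have h5 : ((k : ℝ) + 1) ≠ 0 := by positivity
  have h6 : ν + ((k : ℝ) + m) + 1 ≠ 0 := ne_of_gt h
  push_cast
  field_simp

lemma summable_cs_abs (ν : ℝ) (m : ℕ) {r : ℝ} (hr : 0 ≤ r) :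
    Summable (fun k => |cs ν m k| * r ^ k) := by
  apply summable_of_ratio_norm_eventually_le (r := 1/2) (by norm_num)
  filter_upwards [Filter.eventually_ge_atTop (⌈|ν|⌉₊ + ⌈2 * r⌉₊)] with k hk
  have hk1 : (⌈|ν|⌉₊ : ℝ) ≤ (k : ℝ) := by exact_mod_cast le_trans (Nat.le_add_right _ _) hk
  have hν : |ν| ≤ (k : ℝ) := le_trans (Nat.le_ceil _) hk1
  have hk2 : (⌈2 * r⌉₊ : ℝ) ≤ (k : ℝ) := by exact_mod_cast le_trans (Nat.le_add_left _ _) hk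
  have hr2 : 2 * r ≤ (k : ℝ) := le_trans (Nat.le_ceil _) hk2
  have hpos : 0 < ν + ((k : ℝ) + m) + 1 := by
    have : -ν ≤ |ν| := neg_le_abs ν
    have hm : (0 : ℝ) ≤ m := Nat.cast_nonneg m
    linarith
  have hrec := cs_rec ν m k hpos
  have hkpos : (0 : ℝ) < (k : ℝ) + 1 := by positivity
  have h1le : 1 ≤ ν + ((k : ℝ) + m) + 1 := by
    have : -ν ≤ |ν| := neg_le_abs ν
    have hm : (0 : ℝ) ≤ m := Nat.cast_nonneg m
    linarith
  have hden : |(((k : ℝ) + 1) * (ν + ((k : ℝ) + m) + 1))| = ((k : ℝ) + 1) * (ν + ((k : ℝ) + m) + 1) :=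
    abs_of_pos (by positivity)
  have key : |cs ν m (k + 1)| = |cs ν m k| / (((k : ℝ) + 1) * (ν + ((k : ℝ) + m) + 1)) := by
    rw [hrec, abs_div, abs_neg, hden]
  rw [Real.norm_eq_abs, Real.norm_eq_abs, abs_mul, abs_mul, abs_abs, abs_abs,
    abs_pow, abs_pow, abs_of_nonneg hr, key]
  rw [pow_succ]
  have hq : |cs ν m k| / (((k : ℝ) + 1) * (ν + ((k : ℝ) + m) + 1)) * (r ^ k * r)
      = (|cs ν m k| * r ^ k) * (r / (((k : ℝ) + 1) * (ν + ((k : ℝ) + m) + 1))) := by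
    ring
  rw [hq]
  have hfac : r / (((k : ℝ) + 1) * (ν + ((k : ℝ) + m) + 1)) ≤ 1 / 2 := by
    rw [div_le_div_iff₀ (by positivity) (by norm_num)]
    nlinarith
  have hnn : (0 : ℝ) ≤ |cs ν m k| * r ^ k := by positivity
  calc (|cs ν m k| * r ^ k) * (r / (((k : ℝ) + 1) * (ν + ((k : ℝ) + m) + 1)))
      ≤ (|cs ν m k| * r ^ k) * (1 / 2) := by
        exact mul_le_mul_of_nonneg_left hfac hnn
    _ = 1 / 2 * (|cs ν m k| * r ^ k) := by ring

lemma summable_cs (ν : ℝ) (m : ℕ) (t : ℝ) :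
    Summable (fun k => cs ν m k * t ^ k) := by
  apply Summable.of_abs
  have := summable_cs_abs ν m (abs_nonneg t)
  refine this.congr fun k => ?_
  rw [abs_mul, abs_pow]

lemma cs_shift (ν : ℝ) (m k : ℕ) :
    ((k : ℝ) + 1) * cs ν m (k + 1) = cs ν (m + 1) k := by
  unfold cs
  have h1 : k + 1 + m = k + (m + 1) := by omega
  rw [h1]
  have h3 : ((k + 1).factorial : ℝ) = ((k : ℝ) + 1) * (k.factorial : ℝ) := by
    rw [Nat.factorial_succ]; push_cast; ring
  rw [h3]
  have hf1 : (k.factorial : ℝ) ≠ 0 := Nat.cast_ne_zero.2 k.factorial_ne_zero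
  have h5 : ((k : ℝ) + 1) ≠ 0 := by positivity
  field_simp

noncomputable def G (ν : ℝ) (m : ℕ) (t : ℝ) : ℝ := ∑' k, cs ν m k * t ^ k

lemma hasDerivAt_G (ν : ℝ) (m : ℕ) (t : ℝ) :
    HasDerivAt (G ν m) (G ν (m + 1) t) t := by
  set R : ℝ := |t| + 1 with hR
  have hRpos : 0 < R := by positivity
  have habs : |t| < R := by rw [hR]; linarith [abs_nonneg t]
  have htmem : t ∈ Ioo (-R) R := by
    rcases abs_lt.1 habs with ⟨h1, h2⟩; exact ⟨h1, h2⟩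
  have hshift : ∀ k : ℕ, ((k : ℝ) + 1) * |cs ν m (k + 1)| = |cs ν (m + 1) k| := by
    intro k
    rw [← cs_shift, abs_mul, abs_of_nonneg (by positivity : (0:ℝ) ≤ (k : ℝ) + 1)]
  have hu : Summable (fun k : ℕ => (k : ℝ) * |cs ν m k| * R ^ (k - 1)) := by
    rw [← summable_nat_add_iff 1]
    have h := summable_cs_abs ν (m + 1) hRpos.le
    refine h.congr fun k => ?_
    rw [← hshift k]
    push_cast
    simp only [Nat.add_sub_cancel]
    try ring
  have hder : HasDerivAt (fun z => ∑' k : ℕ, cs ν m k * z ^ k)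
      (∑' k : ℕ, (k : ℝ) * cs ν m k * t ^ (k - 1)) t := by
    apply hasDerivAt_tsum_of_isPreconnected hu isOpen_Ioo
      (convex_Ioo (-R) R).isPreconnected
      (g := fun (k : ℕ) (z : ℝ) => cs ν m k * z ^ k)
      (g' := fun (k : ℕ) (z : ℝ) => (k : ℝ) * cs ν m k * z ^ (k - 1))
      (fun k y _ => by
        simpa [mul_comm, mul_assoc, mul_left_comm] using
          (hasDerivAt_pow k y).const_mul (cs ν m k))
      (fun k y hy => ?_) htmem (summable_cs ν m t) htmem
    have hyR : |y| ≤ R := le_of_lt (abs_lt.2 ⟨hy.1, hy.2⟩)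
    rw [Real.norm_eq_abs, abs_mul, abs_mul, abs_pow, Nat.abs_cast]
    gcongr
  have hsum : Summable (fun k : ℕ => (k : ℝ) * cs ν m k * t ^ (k - 1)) := by
    rw [← summable_nat_add_iff 1]
    have h := summable_cs ν (m + 1) t
    refine h.congr fun k => ?_
    rw [← cs_shift]
    push_cast
    simp only [Nat.add_sub_cancel]
    try ring
  have heq : (∑' k : ℕ, (k : ℝ) * cs ν m k * t ^ (k - 1)) = G ν (m + 1) t := by
    rw [Summable.tsum_eq_zero_add hsum]
    simp only [Nat.cast_zero, zero_mul, zero_add]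
    unfold G
    refine tsum_congr fun k => ?_
    rw [← cs_shift]
    push_cast
    simp only [Nat.add_sub_cancel]
    try ring
  rw [← heq]
  exact hder

lemma bc_rec' (ν : ℝ) (k : ℕ) :
    ((k : ℝ) + 1) * (ν + (k : ℝ) + 1) * bc ν (k + 1) = -bc ν k := by
  unfold bc
  have hfac : ((k + 1).factorial : ℝ) = ((k : ℝ) + 1) * (k.factorial : ℝ) := by
    rw [Nat.factorial_succ]; push_cast; ring
  have hf1 : (k.factorial : ℝ) ≠ 0 := Nat.cast_ne_zero.2 k.factorial_ne_zero
  have h5 : ((k : ℝ) + 1) ≠ 0 := by positivity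
  have harg : ν + ((k : ℕ) + 1 : ℕ) + 1 = (ν + (k : ℝ) + 1) + 1 := by push_cast; ring
  rw [harg, hfac]
  rcases eq_or_ne (ν + (k : ℝ) + 1) 0 with hz | hz
  · rw [hz, zero_add, Real.Gamma_zero]
    simp [hz]
  · rw [Real.Gamma_add_one hz]
    rw [pow_succ]
    rcases eq_or_ne (Real.Gamma (ν + (k : ℝ) + 1)) 0 with hg | hg
    · simp [hg]
    · field_simp

lemma cs_zero (ν : ℝ) (k : ℕ) : cs ν 0 k = bc ν k := by
  unfold cs
  have hf1 : (k.factorial : ℝ) ≠ 0 := Nat.cast_ne_zero.2 k.factorial_ne_zero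
  simp [div_self hf1]

lemma cs_one (ν : ℝ) (k : ℕ) : cs ν 1 k = ((k : ℝ) + 1) * bc ν (k + 1) := by
  unfold cs
  have hfac : ((k + 1).factorial : ℝ) = ((k : ℝ) + 1) * (k.factorial : ℝ) := by
    rw [Nat.factorial_succ]; push_cast; ring
  have hf1 : (k.factorial : ℝ) ≠ 0 := Nat.cast_ne_zero.2 k.factorial_ne_zero
  rw [hfac]
  field_simp

lemma G_ode (ν : ℝ) (t : ℝ) :
    t * G ν 2 t + (ν + 1) * G ν 1 t + G ν 0 t = 0 := by
  set w : ℕ → ℝ := fun k => (k : ℝ) * cs ν 1 k * t ^ k with hw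
  have hw_succ : ∀ k : ℕ, w (k + 1) = (cs ν 2 k * t ^ k) * t := by
    intro k
    simp only [hw]
    push_cast
    rw [← cs_shift ν 1 k]
    rw [pow_succ]
    ring
  have hwsum : Summable w := by
    rw [← summable_nat_add_iff 1]
    exact ((summable_cs ν 2 t).mul_right t).congr fun k => (hw_succ k).symm
  have h2 : t * G ν 2 t = ∑' k, w k := by
    unfold G
    rw [← tsum_mul_left]
    rw [Summable.tsum_eq_zero_add hwsum]
    simp only [hw, Nat.cast_zero, zero_mul, zero_add]
    refine tsum_congr fun k => ?_
    push_cast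
    rw [← cs_shift ν 1 k, pow_succ]
    ring
  have h1 : (ν + 1) * G ν 1 t = ∑' k, (ν + 1) * (cs ν 1 k * t ^ k) := by
    unfold G; rw [← tsum_mul_left]
  have hsum1 : Summable (fun k => (ν + 1) * (cs ν 1 k * t ^ k)) :=
    (summable_cs ν 1 t).mul_left _
  rw [h2, h1]
  unfold G
  rw [← Summable.tsum_add hwsum hsum1, ← Summable.tsum_add (hwsum.add hsum1) (summable_cs ν 0 t)]
  have : ∀ k : ℕ, w k + (ν + 1) * (cs ν 1 k * t ^ k) + cs ν 0 k * t ^ k = 0 := by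
    intro k
    simp only [hw]
    rw [cs_one, cs_zero]
    have hrec := bc_rec' ν k
    have : ((k : ℝ) * (((k : ℝ) + 1) * bc ν (k + 1)) + (ν + 1) * (((k : ℝ) + 1) * bc ν (k + 1))
        + bc ν k) = ((k : ℝ) + 1) * (ν + (k : ℝ) + 1) * bc ν (k + 1) + bc ν k := by ring
    calc (k : ℝ) * (((k : ℝ) + 1) * bc ν (k + 1)) * t ^ k
          + (ν + 1) * (((k : ℝ) + 1) * bc ν (k + 1) * t ^ k) + bc ν k * t ^ k
        = (((k : ℝ) + 1) * (ν + (k : ℝ) + 1) * bc ν (k + 1) + bc ν k) * t ^ k := by ring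
      _ = 0 := by rw [hrec]; ring
  rw [tsum_congr this]
  simp

/-- The Bessel function of the first kind of order `ν`, defined by its power series
(with the convention `1/Γ = 0` at the poles of `Γ`). -/
noncomputable def besselJ (ν : ℝ) (x : ℝ) : ℝ :=
  ∑' k : ℕ, ((-1 : ℝ) ^ k / ((k.factorial : ℝ) * Real.Gamma (ν + (k : ℝ) + 1))) *
    (x / 2) ^ (2 * (k : ℝ) + ν)

lemma besselJ_eq (ν : ℝ) {x : ℝ} (hx : 0 < x) :
    besselJ ν x = G ν 0 ((x / 2) ^ 2) * (x / 2) ^ ν := by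
  unfold besselJ G
  rw [← tsum_mul_right]
  refine tsum_congr fun k => ?_
  have hx2 : (0 : ℝ) < x / 2 := by linarith
  rw [cs_zero]
  have h1 : (x / 2) ^ (2 * (k : ℝ) + ν) = (x / 2) ^ (2 * (k : ℝ)) * (x / 2) ^ ν :=
    Real.rpow_add hx2 _ _
  have h2 : (x / 2) ^ (2 * (k : ℝ)) = ((x / 2) ^ 2) ^ k := by
    rw [show (2 * (k : ℝ)) = ((2 * k : ℕ) : ℝ) by push_cast; ring, Real.rpow_natCast, pow_mul]
  rw [h1, h2, bc]
  ring

noncomputable def vv (ν : ℝ) (x : ℝ) : ℝ := x ^ (ν + 1/2 : ℝ) * G ν 0 ((x / 2) ^ 2)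

noncomputable def vv1 (ν : ℝ) (x : ℝ) : ℝ :=
  (ν + 1/2) * x ^ (ν - 1/2 : ℝ) * G ν 0 ((x / 2) ^ 2)
    + x ^ (ν + 1/2 : ℝ) * (G ν 1 ((x / 2) ^ 2) * (x / 2))

noncomputable def vv2 (ν : ℝ) (x : ℝ) : ℝ :=
  (ν ^ 2 - 1/4) * x ^ (ν - 3/2 : ℝ) * G ν 0 ((x / 2) ^ 2) - vv ν x

lemma hasDerivAt_q (x : ℝ) : HasDerivAt (fun y : ℝ => (y / 2) ^ 2) (x / 2) x := by
  have h := (((hasDerivAt_id x).div_const 2).pow 2)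
  exact h.congr_deriv (by simp only [id_eq]; push_cast; ring)

lemma hasDerivAt_G_comp (ν : ℝ) (m : ℕ) (x : ℝ) :
    HasDerivAt (fun y : ℝ => G ν m ((y / 2) ^ 2)) (G ν (m + 1) ((x / 2) ^ 2) * (x / 2)) x := by
  have := (hasDerivAt_G ν m ((x / 2) ^ 2)).comp x (hasDerivAt_q x)
  exact this

lemma hasDerivAt_vv (ν : ℝ) {x : ℝ} (hx : 0 < x) :
    HasDerivAt (vv ν) (vv1 ν x) x := by
  have hp : HasDerivAt (fun y : ℝ => y ^ (ν + 1/2 : ℝ))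
      ((ν + 1/2) * x ^ (ν + 1/2 - 1 : ℝ)) x :=
    Real.hasDerivAt_rpow_const (Or.inl (ne_of_gt hx))
  have h := hp.mul (hasDerivAt_G_comp ν 0 x)
  refine h.congr_deriv ?_
  unfold vv1
  rw [show ν - 1/2 = ν + 1/2 - 1 by ring]

lemma hasDerivAt_vv1 (ν : ℝ) {x : ℝ} (hx : 0 < x) :
    HasDerivAt (vv1 ν) (vv2 ν x) x := by
  have hp1 : HasDerivAt (fun y : ℝ => (ν + 1/2) * y ^ (ν - 1/2 : ℝ))
      ((ν + 1/2) * ((ν - 1/2) * x ^ (ν - 1/2 - 1 : ℝ))) x :=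
    (Real.hasDerivAt_rpow_const (Or.inl (ne_of_gt hx))).const_mul _
  have hp2 : HasDerivAt (fun y : ℝ => y ^ (ν + 1/2 : ℝ))
      ((ν + 1/2) * x ^ (ν + 1/2 - 1 : ℝ)) x :=
    Real.hasDerivAt_rpow_const (Or.inl (ne_of_gt hx))
  have hG1q : HasDerivAt (fun y : ℝ => G ν 1 ((y / 2) ^ 2) * (y / 2))
      (G ν 2 ((x / 2) ^ 2) * (x / 2) * (x / 2) + G ν 1 ((x / 2) ^ 2) * (1 / 2)) x := by
    have := (hasDerivAt_G_comp ν 1 x).mul ((hasDerivAt_id x).div_const 2)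
    exact this.congr_deriv (by simp)
  have h := (hp1.mul (hasDerivAt_G_comp ν 0 x)).add (hp2.mul hG1q)
  refine h.congr_deriv ?_
  symm
  -- rewrite all powers in terms of B := x ^ (ν - 3/2)
  set B := x ^ (ν - 3/2 : ℝ) with hB
  have e1 : x ^ (ν - 1/2 : ℝ) = B * x := by
    rw [show (ν - 1/2 : ℝ) = (ν - 3/2) + 1 by ring, Real.rpow_add hx, Real.rpow_one]
  have e2 : x ^ (ν + 1/2 : ℝ) = B * x ^ 2 := by
    rw [show (ν + 1/2 : ℝ) = (ν - 3/2) + 2 by ring, Real.rpow_add hx, Real.rpow_two]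
  have e3 : x ^ (ν - 1/2 - 1 : ℝ) = B := by
    rw [hB, show ν - 1/2 - 1 = ν - 3/2 by ring]
  have e4 : x ^ (ν + 1/2 - 1 : ℝ) = B * x := by
    rw [show ν + 1/2 - 1 = ν - 1/2 by ring]; exact e1
  have hODE := G_ode ν ((x / 2) ^ 2)
  unfold vv2 vv
  rw [e1, e2, e3, e4]
  linear_combination (-(B * x ^ 2)) * hODE

lemma key_identity (ν : ℝ) {x : ℝ} (hx : 0 < x) :
    x ^ 2 * (vv ν x + vv2 ν x) = (ν ^ 2 - 1/4) * vv ν x := by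
  unfold vv2 vv
  have e2 : x ^ (ν + 1/2 : ℝ) = x ^ (ν - 3/2 : ℝ) * x ^ 2 := by
    rw [show (ν + 1/2 : ℝ) = (ν - 3/2) + 2 by ring, Real.rpow_add hx, Real.rpow_two]
  rw [e2]
  ring

lemma vv_bound (ν : ℝ) : ∃ K > 0, ∀ x : ℝ, 1 ≤ x → |vv ν x| ≤ K := by
  set c : ℝ := |ν ^ 2 - 1/4| with hc
  have hc0 : 0 ≤ c := abs_nonneg _
  set φ : ℝ → ℝ := fun x => (vv ν x ^ 2 + vv1 ν x ^ 2) * Real.exp (c / x) with hφ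
  have hφd : ∀ x : ℝ, 0 < x → HasDerivAt φ
      ((2 * vv ν x * vv1 ν x + 2 * vv1 ν x * vv2 ν x) * Real.exp (c / x)
        + (vv ν x ^ 2 + vv1 ν x ^ 2) * (Real.exp (c / x) * (-(c / x ^ 2)))) x := by
    intro x hx
    have hE : HasDerivAt (fun x => vv ν x ^ 2 + vv1 ν x ^ 2)
        (2 * vv ν x * vv1 ν x + 2 * vv1 ν x * vv2 ν x) x := by
      have h1 := (hasDerivAt_vv ν hx).pow 2
      have h2 := (hasDerivAt_vv1 ν hx).pow 2
      have := h1.add h2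
      exact this.congr_deriv (by push_cast; ring)
    have hinv : HasDerivAt (fun x : ℝ => c / x) (-(c / x ^ 2)) x := by
      have h := (hasDerivAt_inv (ne_of_gt hx)).const_mul c
      refine (h.congr_deriv ?_).congr_of_eventuallyEq ?_
      · field_simp
      · filter_upwards with y; rw [div_eq_mul_inv]
    have hexp : HasDerivAt (fun x : ℝ => Real.exp (c / x))
        (Real.exp (c / x) * (-(c / x ^ 2))) x :=
      (Real.hasDerivAt_exp (c / x)).comp x hinv
    exact hE.mul hexp
  have hderiv_nonpos : ∀ x : ℝ, 1 < x → deriv φ x ≤ 0 := by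
    intro x hx1
    have hx : (0 : ℝ) < x := lt_trans zero_lt_one hx1
    rw [(hφd x hx).deriv]
    have hI := key_identity ν hx
    have hd1 : ν ^ 2 - 1/4 ≤ c := le_abs_self _
    have hd2 : -c ≤ ν ^ 2 - 1/4 := neg_abs_le _
    set v := vv ν x
    set w := vv1 ν x
    set u := vv2 ν x
    have hkey : (2 * v * w + 2 * w * u) * x ^ 2 ≤ c * (v ^ 2 + w ^ 2) := by
      have h1 : (2 * v * w + 2 * w * u) * x ^ 2 = 2 * w * ((ν ^ 2 - 1/4) * v) := by
        rw [← hI]; ring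
      rw [h1]
      nlinarith [mul_nonneg (sub_nonneg.2 hd1) (sq_nonneg (v + w)),
        mul_nonneg (by linarith : (0:ℝ) ≤ c + (ν ^ 2 - 1/4)) (sq_nonneg (v - w)),
        sq_nonneg v, sq_nonneg w]
    have hexp_pos : 0 < Real.exp (c / x) := Real.exp_pos _
    have hx2 : (0 : ℝ) < x ^ 2 := by positivity
    have : (2 * v * w + 2 * w * u) ≤ c * (v ^ 2 + w ^ 2) / x ^ 2 := by
      rw [le_div_iff₀ hx2]; exact hkey
    calc (2 * v * w + 2 * w * u) * Real.exp (c / x)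
        + (v ^ 2 + w ^ 2) * (Real.exp (c / x) * (-(c / x ^ 2)))
        = Real.exp (c / x) * ((2 * v * w + 2 * w * u) - c * (v ^ 2 + w ^ 2) / x ^ 2) := by
          ring
      _ ≤ Real.exp (c / x) * 0 := by
          apply mul_le_mul_of_nonneg_left _ hexp_pos.le
          linarith
      _ = 0 := by ring
  have hanti : AntitoneOn φ (Ici 1) := by
    apply antitoneOn_of_deriv_nonpos (convex_Ici 1)
    · intro x hx
      exact ((hφd x (lt_of_lt_of_le zero_lt_one hx)).continuousAt).continuousWithinAt
    · intro x hx
      rw [interior_Ici] at hx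
      exact ((hφd x (lt_trans zero_lt_one hx)).differentiableAt).differentiableWithinAt
    · intro x hx
      rw [interior_Ici] at hx
      exact hderiv_nonpos x hx
  refine ⟨Real.sqrt (φ 1) + 1, by positivity, fun x hx => ?_⟩
  have hx0 : (0 : ℝ) < x := lt_of_lt_of_le zero_lt_one hx
  have h1 : vv ν x ^ 2 ≤ φ x := by
    have hexp1 : 1 ≤ Real.exp (c / x) := by
      rw [Real.one_le_exp_iff]
      positivity
    have hE0 : vv ν x ^ 2 ≤ vv ν x ^ 2 + vv1 ν x ^ 2 := by nlinarith [sq_nonneg (vv1 ν x)]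
    calc vv ν x ^ 2 ≤ vv ν x ^ 2 + vv1 ν x ^ 2 := hE0
      _ = (vv ν x ^ 2 + vv1 ν x ^ 2) * 1 := by ring
      _ ≤ φ x := by
          rw [hφ]
          apply mul_le_mul_of_nonneg_left hexp1 (by positivity)
  have h2 : φ x ≤ φ 1 := hanti (self_mem_Ici) hx hx
  have h3 : vv ν x ^ 2 ≤ φ 1 := le_trans h1 h2
  have h4 : |vv ν x| ≤ Real.sqrt (φ 1) := by
    rw [← Real.sqrt_sq_eq_abs]
    exact Real.sqrt_le_sqrt h3
  linarith

lemma G0_small_bound (ν : ℝ) : ∃ M ≥ 0, ∀ x : ℝ, 0 < x → x ≤ 1 →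
    |G ν 0 ((x / 2) ^ 2)| ≤ M := by
  refine ⟨∑' k, |cs ν 0 k| * (1/4 : ℝ) ^ k,
    tsum_nonneg fun k => by positivity, fun x hx hx1 => ?_⟩
  set t : ℝ := (x / 2) ^ 2 with ht
  have ht0 : 0 ≤ t := sq_nonneg _
  have ht4 : t ≤ 1/4 := by
    rw [ht]
    nlinarith
  have h1 : |G ν 0 t| ≤ ∑' k, |cs ν 0 k| * t ^ k := by
    have hsum : Summable (fun k => ‖cs ν 0 k * t ^ k‖) := by
      refine (summable_cs_abs ν 0 ht0).congr fun k => ?_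
      rw [Real.norm_eq_abs, abs_mul, abs_pow, abs_of_nonneg ht0]
    have := norm_tsum_le_tsum_norm hsum
    rw [Real.norm_eq_abs] at this
    refine le_trans this (le_of_eq (tsum_congr fun k => ?_))
    rw [Real.norm_eq_abs, abs_mul, abs_pow, abs_of_nonneg ht0]
  refine le_trans h1 (Summable.tsum_le_tsum (fun k => ?_) (summable_cs_abs ν 0 ht0)
    (summable_cs_abs ν 0 (by norm_num)))
  exact mul_le_mul_of_nonneg_left (pow_le_pow_left₀ ht0 ht4 k) (abs_nonneg _)

theorem bessel_weighted_pointwise_bound (μ a : ℝ) (h : 0 ≤ a + μ) :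
    ∃ C > (0 : ℝ), ∀ x : ℝ, 0 < x →
      x ^ a * |besselJ μ x| ≤ C * (1 + x) ^ (a - 1 / 2) := by
  obtain ⟨K, hK0, hK⟩ := vv_bound μ
  obtain ⟨M, hM0, hM⟩ := G0_small_bound μ
  set m0 : ℝ := min (1 : ℝ) ((2 : ℝ) ^ (a - 1/2)) with hm0def
  have hm0 : 0 < m0 := lt_min zero_lt_one (Real.rpow_pos_of_pos two_pos _)
  have h2μ : (0 : ℝ) < (2 : ℝ) ^ (-μ) := Real.rpow_pos_of_pos two_pos _
  set C1 : ℝ := (2 : ℝ) ^ (-μ) * (M + 1) / m0 with hC1def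
  have hC1 : 0 < C1 := by
    apply div_pos _ hm0
    positivity
  set C2 : ℝ := (2 : ℝ) ^ (-μ) * (K + 1) * max 1 ((2 : ℝ) ^ (1/2 - a)) with hC2def
  have hC2 : 0 < C2 := by
    apply mul_pos (by positivity)
    exact lt_max_of_lt_left zero_lt_one
  refine ⟨max C1 C2, lt_max_of_lt_left hC1, fun x hx => ?_⟩
  have h1x : (0 : ℝ) < 1 + x := by linarith
  have hJ : besselJ μ x = G μ 0 ((x / 2) ^ 2) * (x / 2) ^ μ := besselJ_eq μ hx
  have hx2 : (0 : ℝ) < x / 2 := by linarith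
  have hhalf : (x / 2 : ℝ) ^ μ = x ^ μ * (2 : ℝ) ^ (-μ) := by
    rw [Real.div_rpow hx.le (by norm_num : (0:ℝ) ≤ 2), Real.rpow_neg (by norm_num : (0:ℝ) ≤ 2),
      div_eq_mul_inv]
  have habsJ : |besselJ μ x| = |G μ 0 ((x / 2) ^ 2)| * x ^ μ * (2 : ℝ) ^ (-μ) := by
    rw [hJ, abs_mul, hhalf, abs_of_pos (by positivity : (0:ℝ) < x ^ μ * (2:ℝ) ^ (-μ))]
    ring
  have hrpow_nonneg : (0 : ℝ) ≤ (1 + x) ^ (a - 1/2) := (Real.rpow_pos_of_pos h1x _).le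
  rcases le_total x 1 with hx1 | hx1
  · -- small x
    have hG := hM x hx hx1
    have hxa : x ^ a * x ^ μ = x ^ (a + μ) := (Real.rpow_add hx a μ).symm
    have hbound : x ^ a * |besselJ μ x| ≤ (2 : ℝ) ^ (-μ) * M := by
      rw [habsJ]
      have : x ^ a * (|G μ 0 ((x / 2) ^ 2)| * x ^ μ * (2 : ℝ) ^ (-μ))
          = (|G μ 0 ((x / 2) ^ 2)| * (x ^ (a + μ))) * (2 : ℝ) ^ (-μ) := by
        rw [← hxa]; ring
      rw [this]
      have hle1 : x ^ (a + μ) ≤ 1 := Real.rpow_le_one hx.le hx1 h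
      have hG0 : (0 : ℝ) ≤ |G μ 0 ((x / 2) ^ 2)| := abs_nonneg _
      calc |G μ 0 ((x / 2) ^ 2)| * x ^ (a + μ) * (2 : ℝ) ^ (-μ)
          ≤ M * 1 * (2 : ℝ) ^ (-μ) := by
            apply mul_le_mul_of_nonneg_right _ h2μ.le
            apply mul_le_mul hG hle1 (Real.rpow_pos_of_pos hx _).le hM0
        _ = (2 : ℝ) ^ (-μ) * M := by ring
    have hm : m0 ≤ (1 + x) ^ (a - 1/2) := by
      rcases le_or_gt 0 (a - 1/2) with he | he
      · refine le_trans (min_le_left _ _) ?_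
        exact Real.one_le_rpow (by linarith) he
      · refine le_trans (min_le_right _ _) ?_
        exact Real.rpow_le_rpow_of_nonpos h1x (by linarith) he.le
    calc x ^ a * |besselJ μ x| ≤ (2 : ℝ) ^ (-μ) * M := hbound
      _ ≤ (2 : ℝ) ^ (-μ) * (M + 1) := by nlinarith
      _ = C1 * m0 := by
          rw [hC1def, div_mul_cancel₀ _ (ne_of_gt hm0)]
      _ ≤ C1 * (1 + x) ^ (a - 1/2) := mul_le_mul_of_nonneg_left hm hC1.le
      _ ≤ max C1 C2 * (1 + x) ^ (a - 1/2) :=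
          mul_le_mul_of_nonneg_right (le_max_left _ _) hrpow_nonneg
  · -- large x
    have hvv := hK x hx1
    have hvv_eq : |vv μ x| = x ^ (μ + 1/2 : ℝ) * |G μ 0 ((x / 2) ^ 2)| := by
      unfold vv
      rw [abs_mul, abs_of_pos (Real.rpow_pos_of_pos hx _)]
    have heq : x ^ a * |besselJ μ x| = (2 : ℝ) ^ (-μ) * (x ^ (a - 1/2 : ℝ) * |vv μ x|) := by
      rw [habsJ, hvv_eq]
      rw [show (a : ℝ) = (a - 1/2) + (1/2) by ring] at *
      have h1 : x ^ (a - 1/2 + 1/2 : ℝ) = x ^ (a - 1/2 : ℝ) * x ^ (1/2 : ℝ) :=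
        Real.rpow_add hx _ _
      have h2 : x ^ (μ + 1/2 : ℝ) = x ^ μ * x ^ (1/2 : ℝ) := Real.rpow_add hx _ _
      rw [h1, h2]
      ring_nf
    have hxa : x ^ (a - 1/2 : ℝ) ≤ max 1 ((2 : ℝ) ^ (1/2 - a)) * (1 + x) ^ (a - 1/2) := by
      rcases le_or_gt 0 (a - 1/2) with he | he
      · calc x ^ (a - 1/2 : ℝ) ≤ (1 + x) ^ (a - 1/2) :=
              Real.rpow_le_rpow hx.le (by linarith) he
          _ = 1 * (1 + x) ^ (a - 1/2) := (one_mul _).symm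
          _ ≤ max 1 ((2 : ℝ) ^ (1/2 - a)) * (1 + x) ^ (a - 1/2) :=
              mul_le_mul_of_nonneg_right (le_max_left _ _) hrpow_nonneg
      · have h2x : 1 + x ≤ 2 * x := by linarith
        have hstep : (2 * x : ℝ) ^ (a - 1/2 : ℝ) ≤ (1 + x) ^ (a - 1/2) :=
          Real.rpow_le_rpow_of_nonpos h1x h2x he.le
        have hmul : (2 * x : ℝ) ^ (a - 1/2 : ℝ) = (2:ℝ) ^ (a - 1/2 : ℝ) * x ^ (a - 1/2 : ℝ) :=
          Real.mul_rpow (by norm_num) hx.le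
        have h2pos : (0:ℝ) < (2:ℝ) ^ (a - 1/2 : ℝ) := Real.rpow_pos_of_pos two_pos _
        have hxx : x ^ (a - 1/2 : ℝ) = ((2:ℝ) ^ (a - 1/2 : ℝ))⁻¹ * (2 * x : ℝ) ^ (a - 1/2 : ℝ) := by
          rw [hmul]
          field_simp
        have hinv : ((2:ℝ) ^ (a - 1/2 : ℝ))⁻¹ = (2:ℝ) ^ (1/2 - a : ℝ) := by
          rw [← Real.rpow_neg (by norm_num : (0:ℝ) ≤ 2)]
          norm_num
        rw [hxx, hinv]
        calc (2:ℝ) ^ (1/2 - a : ℝ) * (2 * x : ℝ) ^ (a - 1/2 : ℝ)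
            ≤ (2:ℝ) ^ (1/2 - a : ℝ) * (1 + x) ^ (a - 1/2) :=
              mul_le_mul_of_nonneg_left hstep (Real.rpow_pos_of_pos two_pos _).le
          _ ≤ max 1 ((2 : ℝ) ^ (1/2 - a)) * (1 + x) ^ (a - 1/2) :=
              mul_le_mul_of_nonneg_right (le_max_right _ _) hrpow_nonneg
    calc x ^ a * |besselJ μ x|
        = (2 : ℝ) ^ (-μ) * (x ^ (a - 1/2 : ℝ) * |vv μ x|) := heq
      _ ≤ (2 : ℝ) ^ (-μ) * (x ^ (a - 1/2 : ℝ) * (K + 1)) := by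
          apply mul_le_mul_of_nonneg_left _ h2μ.le
          apply mul_le_mul_of_nonneg_left (by linarith) (Real.rpow_pos_of_pos hx _).le
      _ = (2 : ℝ) ^ (-μ) * (K + 1) * x ^ (a - 1/2 : ℝ) := by ring
      _ ≤ (2 : ℝ) ^ (-μ) * (K + 1) * (max 1 ((2 : ℝ) ^ (1/2 - a)) * (1 + x) ^ (a - 1/2)) := by
          apply mul_le_mul_of_nonneg_left hxa (by positivity)
      _ = C2 * (1 + x) ^ (a - 1/2) := by rw [hC2def]; ring
      _ ≤ max C1 C2 * (1 + x) ^ (a - 1/2) :=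
          mul_le_mul_of_nonneg_right (le_max_right _ _) hrpow_nonneg
end

section
/- Let n ≥ 3 be an integer, let ν ≥ (n−2)/2 be real, and let σ > n/2. Then there exists a constant C > 0 (depending only on n, ν, σ) such that for every 0 < λ ≤ 1, ∫₀^∞ ∫₀^∞ r s · J_ν(λr)² J_ν(λs)² (1+r)^{−2σ} (1+s)^{−2σ} dr ds ≤ C λ^{2(n−2)}. -/
open MeasureTheory Real Set

set_option maxHeartbeats 1000000

namespace BesselAux

noncomputable def pcoef (ν : ℝ) (k : ℕ) : ℝ :=
  (-1 : ℝ) ^ k / ((k.factorial : ℝ) * Real.Gamma (ν + (k : ℝ) + 1))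

noncomputable def dcoef (a : ℕ → ℝ) (k : ℕ) : ℝ := ((k : ℝ) + 1) * a (k + 1)

noncomputable def psum (a : ℕ → ℝ) (t : ℝ) : ℝ := ∑' k : ℕ, a k * t ^ k

def FactBound (a : ℕ → ℝ) (M : ℝ) : Prop := ∀ k : ℕ, |a k| ≤ M / (k.factorial : ℝ)

theorem dcoef_factBound {a : ℕ → ℝ} {M : ℝ} (h : FactBound a M) :
    FactBound (dcoef a) M := by
  intro k
  have h1 := h (k + 1)
  have hfac : ((k+1).factorial : ℝ) = ((k:ℝ)+1) * (k.factorial : ℝ) := by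
    rw [Nat.factorial_succ]; push_cast; ring
  have hk1 : (0:ℝ) < (k:ℝ) + 1 := by positivity
  calc |dcoef a k| = ((k:ℝ)+1) * |a (k+1)| := by
        rw [dcoef, abs_mul, abs_of_pos hk1]
    _ ≤ ((k:ℝ)+1) * (M / ((k+1).factorial : ℝ)) := by
        exact mul_le_mul_of_nonneg_left h1 hk1.le
    _ = M / (k.factorial : ℝ) := by
        rw [hfac]; field_simp

theorem summable_factBound {a : ℕ → ℝ} {M : ℝ} (h : FactBound a M) (t : ℝ) :
    Summable (fun k : ℕ => a k * t ^ k) := by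
  apply Summable.of_norm
  refine Summable.of_nonneg_of_le (fun k => norm_nonneg _) (fun k => ?_)
    ((Real.summable_pow_div_factorial |t|).mul_left M)
  · 
    rw [norm_mul, norm_pow, Real.norm_eq_abs, Real.norm_eq_abs]
    have hfk : (0:ℝ) < (k.factorial : ℝ) := by positivity
    calc |a k| * |t| ^ k ≤ (M / (k.factorial : ℝ)) * |t| ^ k := by
          apply mul_le_mul_of_nonneg_right (h k) (by positivity)
      _ = M * (|t| ^ k / (k.factorial : ℝ)) := by ring

theorem summable_deriv_factBound {a : ℕ → ℝ} {M : ℝ} (h : FactBound a M)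
    {R : ℝ} (hR : 1 ≤ R) {t : ℝ} (ht : |t| ≤ R) :
    Summable (fun k : ℕ => a k * ((k : ℝ) * t ^ (k - 1))) := by
  apply Summable.of_norm
  refine Summable.of_nonneg_of_le (fun k => norm_nonneg _) (fun k => ?_)
    ((Real.summable_pow_div_factorial (2*R)).mul_left M)
  · 
    have hR0 : (0:ℝ) < R := lt_of_lt_of_le one_pos hR
    have hfk : (0:ℝ) < (k.factorial : ℝ) := by positivity
    have hkey : (k : ℝ) * |t| ^ (k-1) ≤ (2*R)^k := by
      rcases Nat.eq_zero_or_pos k with hk | hk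
      · subst hk; simp
      · have h1 : |t| ^ (k-1) ≤ R ^ (k-1) := pow_le_pow_left₀ (abs_nonneg t) ht _
        have h2 : R ^ (k-1) ≤ R ^ k := pow_le_pow_right₀ hR (Nat.sub_le k 1)
        have h3 : (k:ℝ) ≤ 2^k := by
          exact_mod_cast Nat.le_of_lt (Nat.lt_two_pow_self (n := k))
        calc (k:ℝ) * |t|^(k-1) ≤ (k:ℝ) * R ^ k := by
              apply mul_le_mul_of_nonneg_left (h1.trans h2) (by positivity)
          _ ≤ 2^k * R^k := by
              apply mul_le_mul_of_nonneg_right h3 (by positivity)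
          _ = (2*R)^k := by rw [mul_pow]
    rw [norm_mul, Real.norm_eq_abs, Real.norm_eq_abs]
    have habs : |(k:ℝ) * t ^ (k-1)| ≤ (k:ℝ) * |t| ^ (k-1) := by
      rw [abs_mul, abs_pow, Nat.abs_cast]
    calc |a k| * |(k:ℝ) * t^(k-1)| ≤ (M / (k.factorial:ℝ)) * ((2*R)^k) := by
          apply mul_le_mul (h k) (habs.trans hkey) (abs_nonneg _)
          have := (abs_nonneg (a 0)).trans (h 0)
          simp at this
          positivity
      _ = M * ((2*R)^k / (k.factorial:ℝ)) := by ring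

theorem hasDerivAt_psum {a : ℕ → ℝ} {M : ℝ} (h : FactBound a M) (t : ℝ) :
    HasDerivAt (psum a) (psum (dcoef a) t) t := by
  set R : ℝ := |t| + 1 with hRdef
  have hR1 : (1:ℝ) ≤ R := by
    rw [hRdef]; have := abs_nonneg t; linarith
  have hR0 : (0:ℝ) < R := lt_of_lt_of_le one_pos hR1
  have htR : |t| < R := by rw [hRdef]; linarith
  have hu : Summable (fun k : ℕ => M * ((2*R) ^ k / (k.factorial : ℝ))) :=
    (Real.summable_pow_div_factorial (2*R)).mul_left M
  have hg : ∀ (k : ℕ) (y : ℝ), y ∈ Metric.ball (0:ℝ) R →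
      HasDerivAt (fun z : ℝ => a k * z ^ k) (a k * ((k:ℝ) * y ^ (k-1))) y :=
    fun k y _ => by simpa using (hasDerivAt_pow k y).const_mul (a k)
  have hg' : ∀ (k : ℕ) (y : ℝ), y ∈ Metric.ball (0:ℝ) R →
      ‖a k * ((k:ℝ) * y ^ (k-1))‖ ≤ M * ((2*R) ^ k / (k.factorial : ℝ)) := by
    intro k y hy
    have hyR : |y| ≤ R := by
      have := mem_ball_zero_iff.mp hy
      exact le_of_lt (by simpa [Real.norm_eq_abs] using this)
    have hfk : (0:ℝ) < (k.factorial : ℝ) := by positivity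
    have hkey : (k : ℝ) * |y| ^ (k-1) ≤ (2*R)^k := by
      rcases Nat.eq_zero_or_pos k with hk | hk
      · subst hk; simp
      · have h1 : |y| ^ (k-1) ≤ R ^ (k-1) := pow_le_pow_left₀ (abs_nonneg y) hyR _
        have h2 : R ^ (k-1) ≤ R ^ k := pow_le_pow_right₀ hR1 (Nat.sub_le k 1)
        have h3 : (k:ℝ) ≤ 2^k := by
          exact_mod_cast Nat.le_of_lt (Nat.lt_two_pow_self (n := k))
        calc (k:ℝ) * |y|^(k-1) ≤ (k:ℝ) * R ^ k := by
              apply mul_le_mul_of_nonneg_left (h1.trans h2) (by positivity)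
          _ ≤ 2^k * R^k := by
              apply mul_le_mul_of_nonneg_right h3 (by positivity)
          _ = (2*R)^k := by rw [mul_pow]
    have hM : (0:ℝ) ≤ M := le_trans (abs_nonneg (a 0)) (by simpa using h 0)
    rw [Real.norm_eq_abs, abs_mul]
    have habs2 : |(k:ℝ) * y ^ (k-1)| ≤ (k:ℝ) * |y| ^ (k-1) := by
      rw [abs_mul, abs_pow, Nat.abs_cast]
    calc |a k| * |(k:ℝ) * y^(k-1)| ≤ (M / (k.factorial:ℝ)) * ((2*R)^k) :=
          mul_le_mul (h k) (habs2.trans hkey) (abs_nonneg _) (div_nonneg hM hfk.le)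
      _ = M * ((2*R)^k / (k.factorial:ℝ)) := by ring
  have h0mem : (0:ℝ) ∈ Metric.ball (0:ℝ) R := by simpa using hR0
  have htmem : t ∈ Metric.ball (0:ℝ) R := by
    simpa [Real.norm_eq_abs] using htR
  have key : HasDerivAt (fun z => ∑' k : ℕ, a k * z ^ k)
      (∑' k : ℕ, a k * ((k:ℝ) * t ^ (k-1))) t :=
    hasDerivAt_tsum_of_isPreconnected hu Metric.isOpen_ball
      ((convex_ball (0:ℝ) R).isPreconnected) hg hg' h0mem
      (summable_factBound h 0) htmem
  have heq : (∑' k : ℕ, a k * ((k:ℝ) * t ^ (k-1))) = psum (dcoef a) t := by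
    rw [Summable.tsum_eq_zero_add (summable_deriv_factBound h hR1 htR.le)]
    simp only [Nat.cast_zero, zero_mul, mul_zero, zero_add]
    rw [psum]
    apply tsum_congr
    intro k
    rw [dcoef]
    simp only [Nat.add_sub_cancel]
    push_cast
    ring
  rw [← heq]
  exact key

theorem gamma_pos (ν : ℝ) (hν : 0 < ν) (k : ℕ) : 0 < Real.Gamma (ν + (k:ℝ) + 1) :=
  Real.Gamma_pos_of_pos (by positivity)

theorem gamma_mono (ν : ℝ) (hν : 0 < ν) (k : ℕ) :
    Real.Gamma (ν + 1) ≤ Real.Gamma (ν + (k:ℝ) + 1) := by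
  induction k with
  | zero => simp
  | succ k ih =>
    have hne : ν + (k:ℝ) + 1 ≠ 0 := by positivity
    have hstep : Real.Gamma (ν + ((k:ℕ)+1 : ℕ) + 1) = (ν + (k:ℝ) + 1) * Real.Gamma (ν + (k:ℝ) + 1) := by
      rw [show (ν + (((k:ℕ)+1 : ℕ)):ℝ) + 1 = (ν + (k:ℝ) + 1) + 1 by push_cast; ring]
      exact Real.Gamma_add_one hne
    rw [hstep]
    have h1 : (1:ℝ) ≤ ν + (k:ℝ) + 1 := by
      have : (0:ℝ) ≤ (k:ℝ) := Nat.cast_nonneg k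
      linarith
    nlinarith [gamma_pos ν hν k]

theorem pcoef_factBound (ν : ℝ) (hν : 0 < ν) :
    FactBound (pcoef ν) (1 / Real.Gamma (ν + 1)) := by
  intro k
  have hg := gamma_pos ν hν k
  have hg1 : 0 < Real.Gamma (ν + 1) := Real.Gamma_pos_of_pos (by positivity)
  have hfk : (0:ℝ) < (k.factorial : ℝ) := by positivity
  rw [pcoef, abs_div, abs_pow, abs_neg, abs_one, one_pow,
    abs_of_pos (by positivity : (0:ℝ) < (k.factorial:ℝ) * Real.Gamma (ν + (k:ℝ) + 1))]
  have h2 : (k.factorial:ℝ) * Real.Gamma (ν+1) ≤ (k.factorial:ℝ) * Real.Gamma (ν + (k:ℝ) + 1) :=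
    mul_le_mul_of_nonneg_left (gamma_mono ν hν k) hfk.le
  have h3 : (1:ℝ) / ((k.factorial:ℝ) * Real.Gamma (ν + (k:ℝ) + 1))
      ≤ 1 / ((k.factorial:ℝ) * Real.Gamma (ν+1)) :=
    one_div_le_one_div_of_le (by positivity) h2
  have h4 : (1:ℝ) / ((k.factorial:ℝ) * Real.Gamma (ν+1))
      = 1 / Real.Gamma (ν+1) / (k.factorial:ℝ) := by
    field_simp
  rw [h4] at h3
  exact h3

theorem pcoef_rec (ν : ℝ) (hν : 0 < ν) (k : ℕ) :
    ((k:ℝ) + ν + 1) * dcoef (pcoef ν) k + pcoef ν k = 0 := by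
  have hne : ν + (k:ℝ) + 1 ≠ 0 := by positivity
  have hg := gamma_pos ν hν k
  have hfk : (0:ℝ) < (k.factorial : ℝ) := by positivity
  have hgam : Real.Gamma (ν + ((k:ℕ)+1 : ℕ) + 1) = (ν + (k:ℝ) + 1) * Real.Gamma (ν + (k:ℝ) + 1) := by
    rw [show (ν + (((k:ℕ)+1 : ℕ)):ℝ) + 1 = (ν + (k:ℝ) + 1) + 1 by push_cast; ring]
    exact Real.Gamma_add_one hne
  have hfacs : (((k+1).factorial) : ℝ) = ((k:ℝ)+1) * (k.factorial:ℝ) := by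
    rw [Nat.factorial_succ]; push_cast; ring
  rw [dcoef, pcoef, pcoef, hgam, hfacs]
  have hk1 : ((k:ℝ)+1) ≠ 0 := by positivity
  field_simp
  ring

theorem psum_ode (ν : ℝ) (hν : 0 < ν) (t : ℝ) :
    t * psum (dcoef (dcoef (pcoef ν))) t + (ν + 1) * psum (dcoef (pcoef ν)) t
      + psum (pcoef ν) t = 0 := by
  set M := 1 / Real.Gamma (ν + 1) with hM
  have hb0 : FactBound (pcoef ν) M := pcoef_factBound ν hν
  have hb1 : FactBound (dcoef (pcoef ν)) M := dcoef_factBound hb0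
  have hb2 : FactBound (dcoef (dcoef (pcoef ν))) M := dcoef_factBound hb1
  have hR1 : (1:ℝ) ≤ |t| + 1 := by have := abs_nonneg t; linarith
  have htR : |t| ≤ |t| + 1 := by linarith
  have hsum_e : Summable (fun k : ℕ => (dcoef (pcoef ν)) k * ((k:ℝ) * t ^ (k-1))) :=
    summable_deriv_factBound hb1 hR1 htR
  have hsum_e' : Summable (fun k : ℕ => ((dcoef (pcoef ν)) k * ((k:ℝ) * t ^ (k-1))) * t) :=
    hsum_e.mul_right t
  -- step a : t * psum d2 t = ∑' k, d1 k * (k * t^(k-1)) * t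
  have stepa : t * psum (dcoef (dcoef (pcoef ν))) t
      = ∑' k : ℕ, ((dcoef (pcoef ν)) k * ((k:ℝ) * t ^ (k-1))) * t := by
    rw [Summable.tsum_eq_zero_add hsum_e']
    simp only [Nat.cast_zero, zero_mul, mul_zero, zero_add, zero_mul]
    rw [psum, ← tsum_mul_left]
    apply tsum_congr
    intro k
    rw [dcoef]
    simp only [Nat.add_sub_cancel]
    push_cast
    ring
  have hsum1 : Summable (fun k : ℕ => (ν + 1) * ((dcoef (pcoef ν)) k * t ^ k)) :=
    (summable_factBound hb1 t).mul_left _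
  have hsum0 : Summable (fun k : ℕ => (pcoef ν) k * t ^ k) := summable_factBound hb0 t
  have stepb : (ν + 1) * psum (dcoef (pcoef ν)) t
      = ∑' k : ℕ, (ν + 1) * ((dcoef (pcoef ν)) k * t ^ k) := by
    rw [psum, tsum_mul_left]
  rw [stepa, stepb, psum, ← Summable.tsum_add hsum_e' hsum1, ← Summable.tsum_add (hsum_e'.add hsum1) hsum0]
  have : ∀ k : ℕ, ((dcoef (pcoef ν)) k * ((k:ℝ) * t ^ (k-1))) * t
      + (ν + 1) * ((dcoef (pcoef ν)) k * t ^ k) + (pcoef ν) k * t ^ k = 0 := by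
    intro k
    have hrec := pcoef_rec ν hν k
    rcases Nat.eq_zero_or_pos k with hk | hk
    · subst hk
      simp only [Nat.cast_zero, zero_mul, mul_zero, zero_add, pow_zero, mul_one]
      linear_combination hrec
    · have hpow : t ^ (k-1) * t = t ^ k := by
        rw [← pow_succ]
        congr 1
        omega
      have expand : ((dcoef (pcoef ν)) k * ((k:ℝ) * t ^ (k-1))) * t
          = (k:ℝ) * (dcoef (pcoef ν)) k * t ^ k := by
        rw [← hpow]; ring
      rw [expand]
      linear_combination t ^ k * hrec
  rw [tsum_congr this, tsum_zero]

noncomputable def bF (ν x : ℝ) : ℝ := (x/2) ^ ν * psum (pcoef ν) ((x/2)^(2:ℕ))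

noncomputable def bF1 (ν x : ℝ) : ℝ :=
  ν/2 * (x/2) ^ (ν-1) * psum (pcoef ν) ((x/2)^(2:ℕ))
    + (x/2) ^ (ν+1) * psum (dcoef (pcoef ν)) ((x/2)^(2:ℕ))

noncomputable def bF2 (ν x : ℝ) : ℝ :=
  ν*(ν-1)/4 * (x/2) ^ (ν-2) * psum (pcoef ν) ((x/2)^(2:ℕ))
    + (2*ν+1)/2 * (x/2) ^ ν * psum (dcoef (pcoef ν)) ((x/2)^(2:ℕ))
    + (x/2) ^ (ν+2) * psum (dcoef (dcoef (pcoef ν))) ((x/2)^(2:ℕ))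

theorem besselJ_eq_bF (ν : ℝ) {x : ℝ} (hx : 0 < x) : besselJ ν x = bF ν x := by
  have h2 : (0:ℝ) < x/2 := by linarith
  rw [besselJ, bF, psum, ← tsum_mul_left]
  apply tsum_congr
  intro k
  have : (x/2) ^ (2*(k:ℝ) + ν) = ((x/2)^(2:ℕ))^k * (x/2)^ν := by
    rw [Real.rpow_add h2, ← pow_mul]
    congr 1
    rw [show (2:ℝ)*(k:ℝ) = ((2*k : ℕ) : ℝ) by push_cast; ring, Real.rpow_natCast]
  rw [pcoef, this]
  ring

theorem hasDerivAt_bF (ν : ℝ) (hν : 0 < ν) {x : ℝ} (hx : 0 < x) :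
    HasDerivAt (bF ν) (bF1 ν x) x := by
  have h2 : (0:ℝ) < x/2 := by linarith
  have hb0 : FactBound (pcoef ν) (1 / Real.Gamma (ν + 1)) := pcoef_factBound ν hν
  have hhalf : HasDerivAt (fun y : ℝ => y/2) (1/2) x := (hasDerivAt_id x).div_const 2
  have hpow : HasDerivAt (fun y : ℝ => (y/2)^(2:ℕ)) (x/2) x := by
    have := ((hasDerivAt_pow 2 (x/2)).comp x hhalf)
    convert this using 1
    · rfl
    · rfl
    · rfl
    simp
    ring
  have hrpow : HasDerivAt (fun y : ℝ => (y/2) ^ ν) (ν/2 * (x/2)^(ν-1)) x := by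
    have := (Real.hasDerivAt_rpow_const (x := x/2) (p := ν) (Or.inl h2.ne')).comp x hhalf
    convert this using 1
    · rfl
    · rfl
    · rfl
    simp
    ring
  have hG : HasDerivAt (fun y : ℝ => psum (pcoef ν) ((y/2)^(2:ℕ)))
      (psum (dcoef (pcoef ν)) ((x/2)^(2:ℕ)) * (x/2)) x :=
    (hasDerivAt_psum hb0 _).comp x hpow
  have := hrpow.mul hG
  convert this using 1
  · rfl
  · rfl
  · rfl
  rw [bF1]
  rw [show (x/2)^(ν+1) = (x/2)^ν * (x/2) from by
    rw [Real.rpow_add_one h2.ne' ν]]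
  ring

theorem hasDerivAt_bF1 (ν : ℝ) (hν : 0 < ν) {x : ℝ} (hx : 0 < x) :
    HasDerivAt (bF1 ν) (bF2 ν x) x := by
  have h2 : (0:ℝ) < x/2 := by linarith
  have hb0 : FactBound (pcoef ν) (1 / Real.Gamma (ν + 1)) := pcoef_factBound ν hν
  have hb1 : FactBound (dcoef (pcoef ν)) (1 / Real.Gamma (ν + 1)) := dcoef_factBound hb0
  have hhalf : HasDerivAt (fun y : ℝ => y/2) (1/2) x := (hasDerivAt_id x).div_const 2
  have hpow : HasDerivAt (fun y : ℝ => (y/2)^(2:ℕ)) (x/2) x := by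
    have := ((hasDerivAt_pow 2 (x/2)).comp x hhalf)
    convert this using 1
    · rfl
    · rfl
    · rfl
    simp
    ring
  have hrpow1 : HasDerivAt (fun y : ℝ => (y/2) ^ (ν-1)) ((ν-1)/2 * (x/2)^(ν-1-1)) x := by
    have := (Real.hasDerivAt_rpow_const (x := x/2) (p := ν-1) (Or.inl h2.ne')).comp x hhalf
    convert this using 1
    · rfl
    · rfl
    · rfl
    simp
    ring
  have hrpow2 : HasDerivAt (fun y : ℝ => (y/2) ^ (ν+1)) ((ν+1)/2 * (x/2)^(ν+1-1)) x := by
    have := (Real.hasDerivAt_rpow_const (x := x/2) (p := ν+1) (Or.inl h2.ne')).comp x hhalf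
    convert this using 1
    · rfl
    · rfl
    · rfl
    simp
    ring
  have hG : HasDerivAt (fun y : ℝ => psum (pcoef ν) ((y/2)^(2:ℕ)))
      (psum (dcoef (pcoef ν)) ((x/2)^(2:ℕ)) * (x/2)) x :=
    (hasDerivAt_psum hb0 _).comp x hpow
  have hG1 : HasDerivAt (fun y : ℝ => psum (dcoef (pcoef ν)) ((y/2)^(2:ℕ)))
      (psum (dcoef (dcoef (pcoef ν))) ((x/2)^(2:ℕ)) * (x/2)) x :=
    (hasDerivAt_psum hb1 _).comp x hpow
  have hterm1 := ((hrpow1.mul hG).const_mul (ν/2))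
  have hterm2 := hrpow2.mul hG1
  have htotal := hterm1.add hterm2
  have hfn : (fun y : ℝ => ν / 2 * ((y / 2) ^ (ν - 1) * psum (pcoef ν) ((y / 2) ^ (2:ℕ))) +
        (y / 2) ^ (ν + 1) * psum (dcoef (pcoef ν)) ((y / 2) ^ (2:ℕ))) = bF1 ν := by
    funext y
    simp only [bF1]
    ring
  have e1 : (x/2)^(ν-1-1) = (x/2)^(ν-2) := by congr 1; ring
  have e2 : (x/2)^(ν+1-1) = (x/2)^ν := by congr 1; ring
  have e3 : (x/2)^(ν-1) * (x/2) = (x/2)^ν := by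
    rw [← Real.rpow_add_one h2.ne' (ν-1)]; congr 1; ring
  have e4 : (x/2)^(ν+1) * (x/2) = (x/2)^(ν+2) := by
    rw [← Real.rpow_add_one h2.ne' (ν+1)]; congr 1; ring
  have hval : ν / 2 *
        ((ν - 1) / 2 * (x / 2) ^ (ν - 1 - 1) * psum (pcoef ν) ((x / 2) ^ (2:ℕ)) +
          (x / 2) ^ (ν - 1) * (psum (dcoef (pcoef ν)) ((x / 2) ^ (2:ℕ)) * (x / 2))) +
      ((ν + 1) / 2 * (x / 2) ^ (ν + 1 - 1) * psum (dcoef (pcoef ν)) ((x / 2) ^ (2:ℕ)) +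
        (x / 2) ^ (ν + 1) * (psum (dcoef (dcoef (pcoef ν))) ((x / 2) ^ (2:ℕ)) * (x / 2)))
      = bF2 ν x := by
    simp only [bF2]
    rw [e1, e2]
    linear_combination (ν/2 * psum (dcoef (pcoef ν)) ((x/2)^(2:ℕ))) * e3
      + (psum (dcoef (dcoef (pcoef ν))) ((x/2)^(2:ℕ))) * e4
  rw [← hfn, ← hval]
  exact htotal

theorem bessel_ode (ν : ℝ) (hν : 0 < ν) {x : ℝ} (hx : 0 < x) :
    x^2 * bF2 ν x + x * bF1 ν x + (x^2 - ν^2) * bF ν x = 0 := by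
  have h2 : (0:ℝ) < x/2 := by linarith
  have key := psum_ode ν hν ((x/2)^(2:ℕ))
  simp only [bF, bF1, bF2]
  have f1 : (x/2)^(ν-1) = (x/2)^(ν-2) * (x/2) := by
    rw [← Real.rpow_add_one h2.ne']
    congr 1; ring
  have f2 : (x/2)^ν = (x/2)^(ν-2) * (x/2) * (x/2) := by
    rw [← Real.rpow_add_one h2.ne', ← Real.rpow_add_one h2.ne']
    congr 1; ring
  have f3 : (x/2)^(ν+1) = (x/2)^(ν-2) * (x/2) * (x/2) * (x/2) := by
    rw [← Real.rpow_add_one h2.ne', ← Real.rpow_add_one h2.ne', ← Real.rpow_add_one h2.ne']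
    congr 1; ring
  have f4 : (x/2)^(ν+2) = (x/2)^(ν-2) * (x/2) * (x/2) * (x/2) * (x/2) := by
    rw [← Real.rpow_add_one h2.ne', ← Real.rpow_add_one h2.ne', ← Real.rpow_add_one h2.ne',
      ← Real.rpow_add_one h2.ne']
    congr 1; ring
  rw [f1, f2, f3, f4]
  linear_combination ((x/2)^(ν-2) * x^4 / 4) * key

theorem besselJ_sq_bounded (ν : ℝ) (hν : 0 < ν) :
    ∃ B > (0:ℝ), ∀ x : ℝ, 1 ≤ x → besselJ ν x ^ (2:ℕ) ≤ B := by
  set E : ℝ → ℝ := fun x => bF ν x ^ (2:ℕ) + bF1 ν x ^ (2:ℕ) with hEdef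
  set H : ℝ → ℝ := fun x => E x * Real.exp (ν^2 * x⁻¹) with hHdef
  have hH : ∀ x : ℝ, 0 < x → HasDerivAt H
      ((2 * bF ν x ^ (2-1) * bF1 ν x + 2 * bF1 ν x ^ (2-1) * bF2 ν x) * Real.exp (ν^2 * x⁻¹)
        + E x * (Real.exp (ν^2 * x⁻¹) * (ν^2 * -(x^2)⁻¹))) x := by
    intro x hx
    have hF := hasDerivAt_bF ν hν hx
    have hF1 := hasDerivAt_bF1 ν hν hx
    have hE' : HasDerivAt E (2 * bF ν x ^ (2-1) * bF1 ν x + 2 * bF1 ν x ^ (2-1) * bF2 ν x) x :=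
      (hF.pow 2).add (hF1.pow 2)
    have hinner : HasDerivAt (fun y : ℝ => ν^2 * y⁻¹) (ν^2 * -(x^2)⁻¹) x :=
      (hasDerivAt_inv hx.ne').const_mul (ν^2)
    have hexp : HasDerivAt (fun y : ℝ => Real.exp (ν^2 * y⁻¹))
        (Real.exp (ν^2 * x⁻¹) * (ν^2 * -(x^2)⁻¹)) x := hinner.exp
    exact hE'.mul hexp
  have hderiv_nonpos : ∀ x : ℝ, 0 < x →
      (2 * bF ν x ^ (2-1) * bF1 ν x + 2 * bF1 ν x ^ (2-1) * bF2 ν x) * Real.exp (ν^2 * x⁻¹)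
        + E x * (Real.exp (ν^2 * x⁻¹) * (ν^2 * -(x^2)⁻¹)) ≤ 0 := by
    intro x hx
    have hode := bessel_ode ν hν hx
    set F := bF ν x
    set F1 := bF1 ν x
    set F2 := bF2 ν x
    have h1 : x^2 * (2 * F ^ (2-1) * F1 + 2 * F1 ^ (2-1) * F2) - ν^2 * E x
        = -(2*x*F1^2) - ν^2*(F - F1)^2 := by
      simp only [hEdef, pow_one]
      linear_combination (2*F1) * hode
    have hnum : x^2 * (2 * F ^ (2-1) * F1 + 2 * F1 ^ (2-1) * F2) - ν^2 * E x ≤ 0 := by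
      rw [h1]
      nlinarith [sq_nonneg (F - F1), sq_nonneg F1, hx.le, mul_nonneg hx.le (sq_nonneg F1)]
    have hrewrite : (2 * F ^ (2-1) * F1 + 2 * F1 ^ (2-1) * F2) * Real.exp (ν^2 * x⁻¹)
        + E x * (Real.exp (ν^2 * x⁻¹) * (ν^2 * -(x^2)⁻¹))
        = Real.exp (ν^2 * x⁻¹) * ((x^2 * (2 * F ^ (2-1) * F1 + 2 * F1 ^ (2-1) * F2)
            - ν^2 * E x) / x^2) := by
      field_simp
      ring
    rw [hrewrite]
    apply mul_nonpos_of_nonneg_of_nonpos (Real.exp_pos _).le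
    exact div_nonpos_of_nonpos_of_nonneg hnum (sq_nonneg x)
  have anti : AntitoneOn H (Ici (1:ℝ)) := by
    apply antitoneOn_of_deriv_nonpos (convex_Ici 1)
    · intro x hxm
      have hx0 : (0:ℝ) < x := lt_of_lt_of_le one_pos (mem_Ici.mp hxm)
      exact (hH x hx0).continuousAt.continuousWithinAt
    · rw [interior_Ici]
      intro x hxm
      have hx0 : (0:ℝ) < x := lt_trans one_pos (mem_Ioi.mp hxm)
      exact (hH x hx0).differentiableAt.differentiableWithinAt
    · rw [interior_Ici]
      intro x hxm
      have hx0 : (0:ℝ) < x := lt_trans one_pos (mem_Ioi.mp hxm)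
      rw [(hH x hx0).deriv]
      exact hderiv_nonpos x hx0
  refine ⟨H 1 + 1, ?_, ?_⟩
  · have hE1 : 0 ≤ E 1 := by positivity
    have : 0 ≤ H 1 := mul_nonneg hE1 (Real.exp_pos _).le
    linarith
  · intro x hx1
    have hx0 : (0:ℝ) < x := lt_of_lt_of_le one_pos hx1
    have h1 : besselJ ν x ^ (2:ℕ) = bF ν x ^ (2:ℕ) := by rw [besselJ_eq_bF ν hx0]
    have h2 : bF ν x ^ (2:ℕ) ≤ E x := by
      simp only [hEdef]
      nlinarith [sq_nonneg (bF1 ν x)]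
    have h3 : E x ≤ H x := by
      simp only [hHdef]
      have hexp1 : (1:ℝ) ≤ Real.exp (ν^2 * x⁻¹) := by
        rw [show (1:ℝ) = Real.exp 0 by simp]
        apply Real.exp_le_exp.mpr
        positivity
      nlinarith [h2, sq_nonneg (bF ν x), sq_nonneg (bF1 ν x)]
    have h4 : H x ≤ H 1 := anti (mem_Ici.mpr le_rfl) (mem_Ici.mpr hx1) hx1
    linarith

theorem psum_abs_le (ν : ℝ) (hν : 0 < ν) {t : ℝ} (ht : |t| ≤ 1) :
    |psum (pcoef ν) t| ≤ ∑' k : ℕ, (1 / Real.Gamma (ν+1)) / (k.factorial : ℝ) := by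
  set M := 1 / Real.Gamma (ν + 1) with hM
  have hb0 : FactBound (pcoef ν) M := pcoef_factBound ν hν
  have hsum : Summable (fun k : ℕ => pcoef ν k * t ^ k) := summable_factBound hb0 t
  have hsumM : Summable (fun k : ℕ => M / (k.factorial : ℝ)) := by
    have := (Real.summable_pow_div_factorial 1).mul_left M
    apply this.congr
    intro k
    simp [div_eq_mul_inv]
  calc |psum (pcoef ν) t| ≤ ∑' k : ℕ, ‖pcoef ν k * t ^ k‖ := by
        rw [psum, ← Real.norm_eq_abs]
        exact norm_tsum_le_tsum_norm (hsum.abs.congr (fun k => (Real.norm_eq_abs _).symm))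
    _ ≤ ∑' k : ℕ, M / (k.factorial : ℝ) := by
        apply Summable.tsum_le_tsum _ (hsum.abs.congr (fun k => (Real.norm_eq_abs _).symm)) hsumM
        intro k
        rw [Real.norm_eq_abs, abs_mul, abs_pow]
        calc |pcoef ν k| * |t| ^ k ≤ (M / (k.factorial:ℝ)) * 1 := by
              apply mul_le_mul (hb0 k) (pow_le_one₀ (abs_nonneg t) ht) (by positivity) _
              have hfk : (0:ℝ) < (k.factorial : ℝ) := by positivity
              have := (abs_nonneg (pcoef ν 0)).trans (hb0 0)
              simp only [Nat.factorial_zero, Nat.cast_one, div_one] at this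
              exact div_nonneg this hfk.le
          _ = M / (k.factorial:ℝ) := by ring

theorem besselJ_sq_small (ν p : ℝ) (hν : 0 < ν) (hp : 0 ≤ p) (hp2 : p ≤ ν * 2) :
    ∃ S > (0:ℝ), ∀ x : ℝ, 0 < x → x ≤ 1 → besselJ ν x ^ (2:ℕ) ≤ S * x ^ p := by
  set S0 : ℝ := ∑' k : ℕ, (1 / Real.Gamma (ν+1)) / (k.factorial : ℝ) with hS0
  refine ⟨S0^2 + 1, by positivity, ?_⟩
  intro x hx hx1
  have h2 : (0:ℝ) < x/2 := by linarith
  have h21 : x/2 ≤ 1 := by linarith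
  have ht1 : |(x/2)^(2:ℕ)| ≤ 1 := by
    rw [abs_pow, abs_of_pos h2]
    exact pow_le_one₀ h2.le h21
  have hG := psum_abs_le ν hν ht1
  rw [besselJ_eq_bF ν hx, bF, mul_pow]
  have hsq : ((x/2)^ν)^(2:ℕ) = (x/2)^(ν*2) := by
    rw [← Real.rpow_natCast ((x/2)^ν) 2, ← Real.rpow_mul h2.le]
    norm_num
  have hmono1 : (x/2)^(ν*2) ≤ (x/2)^p :=
    Real.rpow_le_rpow_of_exponent_ge h2 h21 hp2
  have hmono2 : (x/2)^p ≤ x^p :=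
    Real.rpow_le_rpow h2.le (by linarith) hp
  have hGsq : (psum (pcoef ν) ((x/2)^(2:ℕ)))^(2:ℕ) ≤ S0^2 := by
    rw [← sq_abs]
    apply pow_le_pow_left₀ (abs_nonneg _) hG
  calc ((x/2)^ν)^(2:ℕ) * (psum (pcoef ν) ((x/2)^(2:ℕ)))^(2:ℕ)
      ≤ x^p * S0^2 := by
        apply mul_le_mul _ hGsq (sq_nonneg _) (by positivity)
        rw [hsq]
        exact hmono1.trans hmono2
    _ ≤ (S0^2 + 1) * x^p := by
        have hxp : (0:ℝ) ≤ x^p := Real.rpow_nonneg hx.le p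
        nlinarith
  
theorem besselJ_sq_pointwise (n : ℕ) (hn : 3 ≤ n) (ν : ℝ) (hν : ((n : ℝ) - 2) / 2 ≤ ν) :
    ∃ K > (0:ℝ), ∀ lam r : ℝ, 0 < lam → lam ≤ 1 → 0 < r →
      besselJ ν (lam * r) ^ (2:ℕ) ≤ K * lam ^ ((n:ℝ)-2) * (1+r) ^ ((n:ℝ)-2) := by
  have hn3 : (3:ℝ) ≤ (n:ℝ) := by exact_mod_cast hn
  have hν0 : 0 < ν := lt_of_lt_of_le (by linarith) hν
  set p : ℝ := (n:ℝ) - 2 with hpdef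
  have hp : 0 ≤ p := by simp only [hpdef]; linarith
  have hp2 : p ≤ ν * 2 := by simp only [hpdef]; linarith
  obtain ⟨S, hS, hSbound⟩ := besselJ_sq_small ν p hν0 hp hp2
  obtain ⟨B, hB, hBbound⟩ := besselJ_sq_bounded ν hν0
  refine ⟨max S B, lt_max_of_lt_left hS, ?_⟩
  intro lam r hlam hlam1 hr
  have hx : 0 < lam * r := mul_pos hlam hr
  have h1r : (0:ℝ) < 1 + r := by linarith
  have hlp : (0:ℝ) < lam ^ p := Real.rpow_pos_of_pos hlam p
  have h1rp : (0:ℝ) < (1+r) ^ p := Real.rpow_pos_of_pos h1r p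
  rcases le_or_gt (lam * r) 1 with hcase | hcase
  · have hb := hSbound (lam * r) hx hcase
    have hsplit : (lam * r) ^ p = lam ^ p * r ^ p := Real.mul_rpow hlam.le hr.le
    have hrle : r ^ p ≤ (1+r) ^ p := Real.rpow_le_rpow hr.le (by linarith) hp
    calc besselJ ν (lam * r) ^ (2:ℕ) ≤ S * (lam * r) ^ p := hb
      _ = S * lam ^ p * r ^ p := by rw [hsplit]; ring
      _ ≤ max S B * lam ^ p * (1+r) ^ p := by
          apply mul_le_mul _ hrle (Real.rpow_nonneg hr.le p) (by positivity)
          exact mul_le_mul_of_nonneg_right (le_max_left S B) hlp.le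
  · have hb := hBbound (lam * r) hcase.le
    have hone : (1:ℝ) ≤ (lam * (1+r)) ^ p := by
      apply Real.one_le_rpow _ hp
      nlinarith
    calc besselJ ν (lam * r) ^ (2:ℕ) ≤ B := hb
      _ ≤ B * (lam * (1+r)) ^ p := le_mul_of_one_le_right hB.le hone
      _ = B * lam ^ p * (1+r) ^ p := by rw [Real.mul_rpow hlam.le h1r.le]; ring
      _ ≤ max S B * lam ^ p * (1+r) ^ p := by
          apply mul_le_mul_of_nonneg_right _ h1rp.le
          exact mul_le_mul_of_nonneg_right (le_max_right S B) hlp.le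

end BesselAux

open BesselAux in
theorem bessel_double_integral_lowfreq
    (n : ℕ) (hn : 3 ≤ n) (ν : ℝ) (hν : ((n : ℝ) - 2) / 2 ≤ ν)
    (σ : ℝ) (hσ : (n : ℝ) / 2 < σ) :
    ∃ C > (0 : ℝ), ∀ lam : ℝ, 0 < lam → lam ≤ 1 →
      (∫ r in Ioi (0 : ℝ), ∫ s in Ioi (0 : ℝ),
          r * s * besselJ ν (lam * r) ^ (2 : ℕ) * besselJ ν (lam * s) ^ (2 : ℕ) *
            (1 + r) ^ (-(2 * σ)) * (1 + s) ^ (-(2 * σ)))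
        ≤ C * lam ^ (2 * ((n : ℝ) - 2)) := by
  have hn3 : (3:ℝ) ≤ (n:ℝ) := by exact_mod_cast hn
  obtain ⟨K, hK, hKb⟩ := besselJ_sq_pointwise n hn ν hν
  set A : ℝ := ∫ r in Ioi (0:ℝ), (1+r) ^ ((n:ℝ) - 1 - 2*σ) with hA
  have hA0 : 0 ≤ A := by
    apply setIntegral_nonneg measurableSet_Ioi
    intro r hr
    have hr0 : (0:ℝ) < r := hr
    exact Real.rpow_nonneg (by linarith) _
  refine ⟨(K * (A+1))^2, pow_pos (mul_pos hK (by linarith)) 2, ?_⟩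
  intro lam hlam hlam1
  set f : ℝ → ℝ := fun r => r * besselJ ν (lam * r) ^ (2:ℕ) * (1+r) ^ (-(2*σ)) with hf
  set I : ℝ := ∫ s in Ioi (0:ℝ), f s with hI
  have hf0 : ∀ r ∈ Ioi (0:ℝ), 0 ≤ f r := by
    intro r hr
    have hr0 : (0:ℝ) < r := hr
    have h1r : (0:ℝ) < 1 + r := by linarith
    simp only [hf]
    have h1 : (0:ℝ) ≤ besselJ ν (lam * r) ^ (2:ℕ) := sq_nonneg _
    have h2 : (0:ℝ) ≤ (1+r) ^ (-(2*σ)) := Real.rpow_nonneg h1r.le _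
    positivity
  have hI0 : 0 ≤ I := setIntegral_nonneg measurableSet_Ioi hf0
  -- the double integral equals I * I
  have hdouble : (∫ r in Ioi (0 : ℝ), ∫ s in Ioi (0 : ℝ),
      r * s * besselJ ν (lam * r) ^ (2 : ℕ) * besselJ ν (lam * s) ^ (2 : ℕ) *
        (1 + r) ^ (-(2 * σ)) * (1 + s) ^ (-(2 * σ))) = I * I := by
    have hinner : ∀ r : ℝ, (∫ s in Ioi (0 : ℝ),
        r * s * besselJ ν (lam * r) ^ (2 : ℕ) * besselJ ν (lam * s) ^ (2 : ℕ) *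
          (1 + r) ^ (-(2 * σ)) * (1 + s) ^ (-(2 * σ))) = f r * I := by
      intro r
      rw [hI, ← integral_const_mul]
      apply integral_congr_ae
      apply ae_of_all
      intro s
      simp only [hf]
      ring
    calc (∫ r in Ioi (0 : ℝ), ∫ s in Ioi (0 : ℝ),
        r * s * besselJ ν (lam * r) ^ (2 : ℕ) * besselJ ν (lam * s) ^ (2 : ℕ) *
          (1 + r) ^ (-(2 * σ)) * (1 + s) ^ (-(2 * σ)))
        = ∫ r in Ioi (0:ℝ), f r * I := by
          apply integral_congr_ae
          exact ae_of_all _ (fun r => hinner r)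
      _ = I * I := by rw [integral_mul_const]
  rw [hdouble]
  -- integrable dominating function
  set p : ℝ := (n:ℝ) - 2 with hpdef
  have hgint : IntegrableOn (fun r : ℝ => (K * lam ^ p) * (1+r) ^ ((n:ℝ) - 1 - 2*σ)) (Ioi 0) := by
    apply Integrable.const_mul
    have hfin : ((Module.finrank ℝ ℝ : ℝ)) < 2*σ - (n:ℝ) + 1 := by
      rw [Module.finrank_self]
      push_cast
      linarith
    have h := integrable_one_add_norm (E := ℝ) (μ := volume) hfin
    apply (h.integrableOn (s := Ioi 0)).congr_fun _ measurableSet_Ioi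
    intro r hr
    have hr0 : (0:ℝ) < r := hr
    show (1 + ‖r‖) ^ (-(2 * σ - (n:ℝ) + 1)) = (1 + r) ^ ((n:ℝ) - 1 - 2 * σ)
    rw [Real.norm_eq_abs, abs_of_pos hr0]
    congr 1
    ring
  have hfle : ∀ᵐ r ∂(volume.restrict (Ioi (0:ℝ))),
      f r ≤ (K * lam ^ p) * (1+r) ^ ((n:ℝ) - 1 - 2*σ) := by
    rw [ae_restrict_iff' measurableSet_Ioi]
    apply ae_of_all
    intro r hr
    have hr0 : (0:ℝ) < r := hr
    have h1r : (0:ℝ) < 1 + r := by linarith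
    have hJ := hKb lam r hlam hlam1 hr0
    have hw : (0:ℝ) ≤ (1+r) ^ (-(2*σ)) := Real.rpow_nonneg h1r.le _
    have step1 : f r ≤ ((1+r) * (K * lam ^ p * (1+r) ^ p)) * (1+r) ^ (-(2*σ)) := by
      simp only [hf]
      apply mul_le_mul_of_nonneg_right _ hw
      apply mul_le_mul (by linarith) hJ (sq_nonneg _) h1r.le
    have step2 : ((1+r) * (K * lam ^ p * (1+r) ^ p)) * (1+r) ^ (-(2*σ))
        = (K * lam ^ p) * ((1+r) ^ p * (1+r) ^ (-(2*σ)) * (1+r)) := by ring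
    have step3 : (1+r) ^ p * (1+r) ^ (-(2*σ)) * (1+r) = (1+r) ^ ((n:ℝ) - 1 - 2*σ) := by
      rw [← Real.rpow_add h1r, ← Real.rpow_add_one h1r.ne']
      congr 1
      rw [hpdef]
      ring
    calc f r ≤ ((1+r) * (K * lam ^ p * (1+r) ^ p)) * (1+r) ^ (-(2*σ)) := step1
      _ = (K * lam ^ p) * ((1+r) ^ p * (1+r) ^ (-(2*σ)) * (1+r)) := step2
      _ = (K * lam ^ p) * (1+r) ^ ((n:ℝ) - 1 - 2*σ) := by rw [step3]
  have hIle : I ≤ (K * lam ^ p) * A := by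
    have hf0' : 0 ≤ᵐ[volume.restrict (Ioi (0:ℝ))] f :=
      (ae_restrict_iff' measurableSet_Ioi).mpr (ae_of_all _ hf0)
    calc I ≤ ∫ r in Ioi (0:ℝ), (K * lam ^ p) * (1+r) ^ ((n:ℝ) - 1 - 2*σ) :=
          integral_mono_of_nonneg hf0' hgint hfle
      _ = (K * lam ^ p) * A := by rw [hA, integral_const_mul]
  have hlp : (0:ℝ) < lam ^ p := Real.rpow_pos_of_pos hlam p
  have hD : I ≤ K * (A+1) * lam ^ p := by
    calc I ≤ (K * lam ^ p) * A := hIle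
      _ ≤ (K * lam ^ p) * (A + 1) := by
          apply mul_le_mul_of_nonneg_left (by linarith) (by positivity)
      _ = K * (A+1) * lam ^ p := by ring
  have hD0 : (0:ℝ) ≤ K * (A+1) * lam ^ p := by positivity
  calc I * I ≤ (K * (A+1) * lam ^ p) * (K * (A+1) * lam ^ p) :=
        mul_le_mul hD hD hI0 hD0
    _ = (K * (A+1))^2 * (lam ^ p * lam ^ p) := by ring
    _ = (K * (A+1))^2 * lam ^ (2 * ((n:ℝ) - 2)) := by
        rw [← Real.rpow_add hlam]
        congr 1
        rw [hpdef]
        ring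
end

section
/- Let n ≥ 3 be an integer, let ν ≥ (n−2)/2 be real, let 1 ≤ q < ∞, and let σ > n/q. Then there exists a constant C > 0 (depending only on n, ν, q, σ) such that for every 0 < λ ≤ 1 and every r > 0, (∫₀^∞ ((rs)^{−(n−2)/2} |J_ν(λr) J_ν(λs)|)^q (1+s)^{−qσ} s^{n−1} ds)^{1/q} ≤ C λ^{n−2} (1+λr)^{−(n−1)/2}. -/
open MeasureTheory Real Set

lemma real_exp_tsum (x : ℝ) : Real.exp x = ∑' n : ℕ, x ^ n / n.factorial := by
  rw [Real.exp_eq_exp_ℝ, NormedSpace.exp_eq_tsum_div]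

namespace PS

variable {b : ℕ → ℝ} {M : ℝ}

lemma M_nonneg (hb : ∀ k, |b k| ≤ M / k.factorial) : 0 ≤ M := by
  have h := (abs_nonneg (b 0)).trans (hb 0)
  simpa using h

lemma summable (hb : ∀ k, |b k| ≤ M / k.factorial) (t : ℝ) :
    Summable (fun k : ℕ => b k * t ^ k) := by
  apply Summable.of_norm_bounded (g := fun k : ℕ => M * (|t| ^ k / k.factorial))
    ((Real.summable_pow_div_factorial |t|).mul_left M)
  intro k
  rw [norm_mul, norm_pow, Real.norm_eq_abs, Real.norm_eq_abs]
  calc |b k| * |t| ^ k ≤ (M / k.factorial) * |t| ^ k := by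
        exact mul_le_mul_of_nonneg_right (hb k) (by positivity)
    _ = M * (|t| ^ k / k.factorial) := by ring

lemma tsum_bound (hb : ∀ k, |b k| ≤ M / k.factorial) (t : ℝ) :
    |∑' k : ℕ, b k * t ^ k| ≤ M * Real.exp |t| := by
  have h1 : |∑' k : ℕ, b k * t ^ k| ≤ ∑' k : ℕ, M * (|t| ^ k / k.factorial) := by
    apply (norm_tsum_le_tsum_norm (f := fun k : ℕ => b k * t ^ k) ?_).trans
    · apply Summable.tsum_le_tsum
      · intro k
        rw [norm_mul, norm_pow, Real.norm_eq_abs, Real.norm_eq_abs]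
        calc |b k| * |t| ^ k ≤ (M / k.factorial) * |t| ^ k :=
              mul_le_mul_of_nonneg_right (hb k) (by positivity)
          _ = M * (|t| ^ k / k.factorial) := by ring
      · exact (summable hb t).abs
      · exact (Real.summable_pow_div_factorial |t|).mul_left M
    · exact (summable hb t).abs
  rw [real_exp_tsum, ← tsum_mul_left] at *
  exact h1

lemma deriv_coeff_bound (hb : ∀ k, |b k| ≤ M / k.factorial) (k : ℕ) :
    |((k : ℝ) + 1) * b (k + 1)| ≤ M / k.factorial := by
  rw [abs_mul]
  have h1 : |((k : ℝ) + 1)| = (k : ℝ) + 1 := abs_of_pos (by positivity)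
  rw [h1]
  have h2 := hb (k + 1)
  have h3 : ((k + 1).factorial : ℝ) = ((k : ℝ) + 1) * k.factorial := by
    rw [Nat.factorial_succ]; push_cast; ring
  calc ((k : ℝ) + 1) * |b (k + 1)| ≤ ((k : ℝ) + 1) * (M / (k + 1).factorial) :=
        mul_le_mul_of_nonneg_left h2 (by positivity)
    _ = M / k.factorial := by
        rw [h3]; field_simp

lemma hasDerivAt (hb : ∀ k, |b k| ≤ M / k.factorial) (t : ℝ) :
    HasDerivAt (fun u : ℝ => ∑' k : ℕ, b k * u ^ k)
      (∑' k : ℕ, ((k : ℝ) + 1) * b (k + 1) * t ^ k) t := by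
  have hM : 0 ≤ M := M_nonneg hb
  set R : ℝ := |t| + 1 with hR
  have hRpos : 0 < R := by positivity
  have htR : t ∈ Metric.ball (0 : ℝ) R := by
    simp only [Metric.mem_ball, Real.dist_eq, sub_zero, hR]
    linarith [abs_nonneg t]
  -- bound sequence
  set u : ℕ → ℝ := fun k => M * ((k : ℝ) * R ^ (k - 1) / k.factorial) with hu
  have husum : Summable u := by
    apply Summable.mul_left
    rw [← summable_nat_add_iff 1]
    have : (fun k : ℕ => ((k + 1 : ℕ) : ℝ) * R ^ ((k + 1) - 1) / (k + 1).factorial)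
        = fun k : ℕ => R ^ k / k.factorial := by
      funext k
      rw [Nat.add_sub_cancel, Nat.factorial_succ]
      push_cast
      field_simp
    rw [this]
    exact Real.summable_pow_div_factorial R
  have key := hasDerivAt_tsum_of_isPreconnected husum Metric.isOpen_ball
    (convex_ball (0:ℝ) R).isPreconnected
    (g := fun k u => b k * u ^ k) (g' := fun k y => b k * ((k : ℝ) * y ^ (k - 1)))
    (fun k y _ => (hasDerivAt_pow k y).const_mul (b k))
    (fun k y hy => ?_) htR (summable hb t) htR
  · have hshift : (∑' k : ℕ, b k * ((k : ℝ) * t ^ (k - 1)))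
        = ∑' k : ℕ, ((k : ℝ) + 1) * b (k + 1) * t ^ k := by
      have hs : Summable (fun k : ℕ => b k * ((k : ℝ) * t ^ (k - 1))) := by
        apply Summable.of_norm_bounded (g := u) husum
        intro k
        rw [Real.norm_eq_abs, abs_mul, abs_mul]
        rcases Nat.eq_zero_or_pos k with hk | hk
        · simp [hk, hu, hM]
        · have : |t| ^ (k - 1) ≤ R ^ (k - 1) := by
            apply pow_le_pow_left₀ (abs_nonneg t)
            simp [hR]
          calc |b k| * (|(k : ℝ)| * |t ^ (k - 1)|)
              ≤ (M / k.factorial) * ((k : ℝ) * R ^ (k - 1)) := by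
                rw [abs_pow]
                apply mul_le_mul (hb k) ?_ (by positivity) (by positivity)
                rw [Nat.abs_cast]
                exact mul_le_mul_of_nonneg_left this (by positivity)
            _ = u k := by rw [hu]; ring
      rw [Summable.tsum_eq_zero_add hs]
      simp only [Nat.cast_zero, Nat.cast_add, Nat.cast_one]
      rw [show (b 0 * ((0:ℝ) * t ^ (0 - 1))) = 0 by ring, zero_add]
      congr 1
      funext k
      rw [Nat.add_sub_cancel]
      push_cast
      ring
    rw [← hshift]
    exact key
  · rw [Real.norm_eq_abs, abs_mul, abs_mul, abs_pow]
    have hyR : |y| ≤ R := le_of_lt (by simpa [Real.dist_eq] using hy)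
    rcases Nat.eq_zero_or_pos k with hk | hk
    · simp [hk, hu, hM]
    · calc |b k| * (|(k : ℝ)| * |y| ^ (k - 1))
          ≤ (M / k.factorial) * ((k : ℝ) * R ^ (k - 1)) := by
            apply mul_le_mul (hb k) ?_ (by positivity) (by positivity)
            rw [Nat.abs_cast]
            exact mul_le_mul_of_nonneg_left (pow_le_pow_left₀ (abs_nonneg y) hyR _) (by positivity)
        _ = u k := by rw [hu]; ring

lemma summable_nat_mul (hb : ∀ k, |b k| ≤ M / k.factorial) (t : ℝ) :
    Summable (fun k : ℕ => (k : ℝ) * b k * t ^ k) := by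
  have hM : 0 ≤ M := M_nonneg hb
  apply Summable.of_norm_bounded (g := fun k : ℕ => M * ((k : ℝ) * |t| ^ k / k.factorial)) ?_ ?_
  · apply Summable.mul_left
    rw [← summable_nat_add_iff 1]
    have : (fun k : ℕ => ((k + 1 : ℕ) : ℝ) * |t| ^ (k + 1) / (k + 1).factorial)
        = fun k : ℕ => |t| * (|t| ^ k / k.factorial) := by
      funext k
      rw [Nat.factorial_succ]
      push_cast
      field_simp
      ring
    rw [this]
    exact (Real.summable_pow_div_factorial |t|).mul_left |t|
  · intro k
    rw [Real.norm_eq_abs, abs_mul, abs_mul, abs_pow, Nat.abs_cast]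
    calc (k : ℝ) * |b k| * |t| ^ k ≤ (k:ℝ) * (M / k.factorial) * |t| ^ k := by
          apply mul_le_mul_of_nonneg_right ?_ (by positivity)
          exact mul_le_mul_of_nonneg_left (hb k) (by positivity)
      _ = M * ((k : ℝ) * |t| ^ k / k.factorial) := by ring

end PS

namespace BJ

noncomputable def c (ν : ℝ) (k : ℕ) : ℝ :=
  (-1 : ℝ) ^ k / ((k.factorial : ℝ) * Real.Gamma (ν + (k : ℝ) + 1))

variable {ν : ℝ} (hν : (1:ℝ)/2 ≤ ν)
include hν

lemma gamma_pos (k : ℕ) : 0 < Real.Gamma (ν + (k : ℝ) + 1) := by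
  apply Real.Gamma_pos_of_pos
  have : (0:ℝ) ≤ k := Nat.cast_nonneg k
  linarith

lemma gamma_ge (k : ℕ) : Real.Gamma (ν + 1) ≤ Real.Gamma (ν + (k : ℝ) + 1) := by
  induction k with
  | zero => simp
  | succ m ih =>
    have hm : (0:ℝ) ≤ m := Nat.cast_nonneg m
    have hne : ν + (m:ℝ) + 1 ≠ 0 := by linarith
    have : Real.Gamma (ν + ((m:ℝ)+1) + 1) = (ν + (m:ℝ) + 1) * Real.Gamma (ν + (m:ℝ) + 1) := by
      rw [show ν + ((m:ℝ)+1) + 1 = (ν + (m:ℝ) + 1) + 1 by ring, Real.Gamma_add_one hne]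
    push_cast
    rw [this]
    have h1 : (1:ℝ) ≤ ν + (m:ℝ) + 1 := by linarith
    nlinarith [gamma_pos hν m, ih]

lemma c_bound (k : ℕ) : |c ν k| ≤ (1 / Real.Gamma (ν + 1)) / k.factorial := by
  have hg := gamma_pos hν k
  have hg1 : 0 < Real.Gamma (ν + 1) := by
    have := gamma_pos hν 0; simpa using this
  have hge := gamma_ge hν k
  have hf : (0:ℝ) < k.factorial := by exact_mod_cast k.factorial_pos
  rw [c, abs_div, abs_pow, abs_neg, abs_one, one_pow, abs_of_pos (by positivity)]
  rw [div_le_div_iff₀ (by positivity) (by positivity), one_div, one_mul]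
  rw [inv_mul_eq_div, le_div_iff₀ hg1]
  nlinarith
end BJ

namespace BJ
open PS

noncomputable def g (ν : ℝ) (t : ℝ) : ℝ := ∑' k : ℕ, c ν k * t ^ k
noncomputable def g1 (ν : ℝ) (t : ℝ) : ℝ := ∑' k : ℕ, ((k:ℝ)+1) * c ν (k+1) * t ^ k
noncomputable def g2 (ν : ℝ) (t : ℝ) : ℝ :=
  ∑' k : ℕ, ((k:ℝ)+1) * (((k+1:ℕ):ℝ)+1) * c ν (k+2) * t ^ k

variable {ν : ℝ} (hν : (1:ℝ)/2 ≤ ν)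
include hν

lemma M_pos : 0 < 1 / Real.Gamma (ν + 1) := by
  have := gamma_pos hν 0
  simp only [Nat.cast_zero, add_zero] at this
  positivity

lemma c1_bound (k : ℕ) :
    |((k:ℝ)+1) * c ν (k+1)| ≤ (1 / Real.Gamma (ν + 1)) / k.factorial :=
  PS.deriv_coeff_bound (c_bound hν) k

lemma c2_bound (k : ℕ) :
    |((k:ℝ)+1) * ((((k+1:ℕ)):ℝ)+1) * c ν (k+2)| ≤ (1 / Real.Gamma (ν + 1)) / k.factorial := by
  have h := PS.deriv_coeff_bound (b := fun j => ((j:ℝ)+1) * c ν (j+1)) (c1_bound hν) k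
  calc |((k:ℝ)+1) * ((((k+1:ℕ)):ℝ)+1) * c ν (k+2)|
      = |((k:ℝ)+1) * ((((k+1:ℕ)):ℝ)+1) * c ν ((k+1)+1)| := by norm_num
    _ ≤ (1 / Real.Gamma (ν + 1)) / k.factorial := by
        convert h using 2; ring

lemma hasDerivAt_g (t : ℝ) : HasDerivAt (g ν) (g1 ν t) t := by
  have h := PS.hasDerivAt (c_bound hν) t
  exact h

lemma hasDerivAt_g1 (t : ℝ) : HasDerivAt (g1 ν) (g2 ν t) t := by
  have h := PS.hasDerivAt (b := fun j => ((j:ℝ)+1) * c ν (j+1)) (c1_bound hν) t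
  refine h.congr_deriv (Eq.symm ?_)
  rw [g2]
  congr 1
  funext k
  push_cast
  ring

lemma g_bound (t : ℝ) : |g ν t| ≤ (1 / Real.Gamma (ν + 1)) * Real.exp |t| :=
  PS.tsum_bound (c_bound hν) t

lemma g1_bound (t : ℝ) : |g1 ν t| ≤ (1 / Real.Gamma (ν + 1)) * Real.exp |t| :=
  PS.tsum_bound (c1_bound hν) t

lemma c_rec (k : ℕ) : ((k:ℝ)+1) * ((k:ℝ) + ν + 1) * c ν (k+1) = - c ν k := by
  have hg := gamma_pos hν k
  have hne : ν + (k:ℝ) + 1 ≠ 0 := ne_of_gt (by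
    have : (0:ℝ) ≤ k := Nat.cast_nonneg k; linarith)
  have hΓ : Real.Gamma (ν + ((k:ℝ)+1) + 1) = (ν + (k:ℝ) + 1) * Real.Gamma (ν + (k:ℝ) + 1) := by
    rw [show ν + ((k:ℝ)+1) + 1 = (ν + (k:ℝ) + 1) + 1 by ring, Real.Gamma_add_one hne]
  have hfact : ((k+1).factorial : ℝ) = ((k:ℝ)+1) * k.factorial := by
    rw [Nat.factorial_succ]; push_cast; ring
  have hf : (0:ℝ) < k.factorial := by exact_mod_cast k.factorial_pos
  rw [c, c]
  push_cast
  rw [hΓ, hfact]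
  field_simp
  ring

lemma g_ode (t : ℝ) : t * g2 ν t + (ν + 1) * g1 ν t + g ν t = 0 := by
  set S1 : ℕ → ℝ := fun k => (k:ℝ) * (((k:ℝ)+1) * c ν (k+1)) * t ^ k with hS1def
  have hsum1 : Summable S1 := PS.summable_nat_mul (c1_bound hν) t
  have hsum2 : Summable (fun k : ℕ => (ν+1) * (((k:ℝ)+1) * c ν (k+1) * t ^ k)) :=
    (PS.summable (c1_bound hν) t).mul_left _
  have hsum3 : Summable (fun k : ℕ => c ν k * t ^ k) := PS.summable (c_bound hν) t
  have h2 : t * g2 ν t = ∑' k, S1 k := by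
    rw [g2, ← tsum_mul_left, Summable.tsum_eq_zero_add hsum1]
    have h0 : S1 0 = 0 := by simp [hS1def]
    rw [h0, zero_add]
    congr 1
    funext k
    simp only [hS1def]
    push_cast
    ring
  have h3 : (ν + 1) * g1 ν t = ∑' k : ℕ, (ν+1) * (((k:ℝ)+1) * c ν (k+1) * t ^ k) := by
    rw [g1, ← tsum_mul_left]
  rw [h2, h3, g, ← Summable.tsum_add hsum1 hsum2, ← Summable.tsum_add (hsum1.add hsum2) hsum3]
  have : ∀ k : ℕ, S1 k + (ν+1) * (((k:ℝ)+1) * c ν (k+1) * t ^ k) + c ν k * t ^ k = 0 := by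
    intro k
    have h := c_rec hν k
    simp only [hS1def]
    linear_combination t ^ k * h
  calc ∑' k : ℕ, (S1 k + (ν+1) * (((k:ℝ)+1) * c ν (k+1) * t ^ k) + c ν k * t ^ k)
      = ∑' (k : ℕ), (0:ℝ) := by congr 1; funext k; rw [this k]
    _ = 0 := tsum_zero

end BJ

namespace BJ

noncomputable def Jd (ν : ℝ) (x : ℝ) : ℝ :=
  ν/2 * (x/2) ^ (ν-1) * g ν (x^2/4) + (x/2) ^ (ν+1) * g1 ν (x^2/4)

noncomputable def Jdd (ν : ℝ) (x : ℝ) : ℝ :=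
  ν*(ν-1)/4 * (x/2) ^ (ν-2) * g ν (x^2/4) + (2*ν+1)/2 * (x/2) ^ ν * g1 ν (x^2/4)
    + (x/2) ^ (ν+2) * g2 ν (x^2/4)

variable {ν : ℝ} (hν : (1:ℝ)/2 ≤ ν)
include hν

lemma besselJ_eq {x : ℝ} (hx : 0 < x) : besselJ ν x = (x/2) ^ ν * g ν (x^2/4) := by
  have hp : (0:ℝ) < x/2 := by linarith
  rw [besselJ, g, ← tsum_mul_left]
  congr 1
  funext k
  have h1 : (x/2 : ℝ) ^ (2 * (k:ℝ) + ν) = (x/2) ^ ν * (x^2/4) ^ k := by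
    rw [Real.rpow_add hp, mul_comm ((x/2:ℝ) ^ (2*(k:ℝ)))]
    congr 1
    have : (2 * (k:ℝ)) = ((2*k : ℕ) : ℝ) := by push_cast; ring
    rw [this, Real.rpow_natCast, pow_mul]
    congr 1
    ring
  rw [h1, c]
  ring

lemma hasDerivAt_besselJ {x : ℝ} (hx : 0 < x) :
    HasDerivAt (besselJ ν) (Jd ν x) x := by
  have hp : (0:ℝ) < x/2 := by linarith
  have hinner : HasDerivAt (fun y : ℝ => y^2/4) (x/2) x := by
    have := (hasDerivAt_pow 2 x).div_const 4
    refine this.congr_deriv (Eq.symm ?_)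
    push_cast
    ring
  have hgpart : HasDerivAt (fun y : ℝ => g ν (y^2/4)) (g1 ν (x^2/4) * (x/2)) x :=
    HasDerivAt.comp (h₂ := g ν) x (hasDerivAt_g hν (x^2/4)) hinner
  have hpow : HasDerivAt (fun y : ℝ => (y/2) ^ ν) (ν * (x/2) ^ (ν-1) * (1/2)) x := by
    have h := HasDerivAt.rpow_const (p := ν) ((hasDerivAt_id x).div_const 2)
      (Or.inl (ne_of_gt hp))
    simp only [id_eq] at h
    convert h using 1
    ring
  have hF : HasDerivAt (fun y : ℝ => (y/2) ^ ν * g ν (y^2/4))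
      ((ν * (x/2) ^ (ν-1) * (1/2)) * g ν (x^2/4) + (x/2) ^ ν * (g1 ν (x^2/4) * (x/2))) x :=
    hpow.mul hgpart
  have heq : besselJ ν =ᶠ[nhds x] (fun y : ℝ => (y/2) ^ ν * g ν (y^2/4)) := by
    filter_upwards [IsOpen.mem_nhds isOpen_Ioi (show x ∈ Ioi (0:ℝ) from hx)] with y hy
    exact besselJ_eq hν hy
  apply HasDerivAt.congr_of_eventuallyEq ?_ heq
  refine hF.congr_deriv (Eq.symm ?_)
  rw [Jd]
  have e2 : (x/2:ℝ) ^ (ν+1) = (x/2) ^ ν * (x/2) := Real.rpow_add_one (ne_of_gt hp) ν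
  rw [e2]
  ring

lemma hasDerivAt_Jd {x : ℝ} (hx : 0 < x) :
    HasDerivAt (Jd ν) (Jdd ν x) x := by
  have hp : (0:ℝ) < x/2 := by linarith
  have hinner : HasDerivAt (fun y : ℝ => y^2/4) (x/2) x := by
    have := (hasDerivAt_pow 2 x).div_const 4
    refine this.congr_deriv (Eq.symm ?_)
    push_cast
    ring
  have hgpart : HasDerivAt (fun y : ℝ => g ν (y^2/4)) (g1 ν (x^2/4) * (x/2)) x :=
    HasDerivAt.comp (h₂ := g ν) x (hasDerivAt_g hν (x^2/4)) hinner
  have hg1part : HasDerivAt (fun y : ℝ => g1 ν (y^2/4)) (g2 ν (x^2/4) * (x/2)) x :=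
    HasDerivAt.comp (h₂ := g1 ν) x (hasDerivAt_g1 hν (x^2/4)) hinner
  have hpow1 : HasDerivAt (fun y : ℝ => (y/2) ^ (ν-1)) ((ν-1) * (x/2) ^ (ν-1-1) * (1/2)) x := by
    have h := HasDerivAt.rpow_const (p := ν-1) ((hasDerivAt_id x).div_const 2)
      (Or.inl (ne_of_gt hp))
    simp only [id_eq] at h
    convert h using 1
    ring
  have hpow2 : HasDerivAt (fun y : ℝ => (y/2) ^ (ν+1)) ((ν+1) * (x/2) ^ (ν+1-1) * (1/2)) x := by
    have h := HasDerivAt.rpow_const (p := ν+1) ((hasDerivAt_id x).div_const 2)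
      (Or.inl (ne_of_gt hp))
    simp only [id_eq] at h
    convert h using 1
    ring
  have hF : HasDerivAt (Jd ν)
      ((ν/2) * (((ν-1) * (x/2) ^ (ν-1-1) * (1/2)) * g ν (x^2/4)
          + (x/2) ^ (ν-1) * (g1 ν (x^2/4) * (x/2)))
        + (((ν+1) * (x/2) ^ (ν+1-1) * (1/2)) * g1 ν (x^2/4)
          + (x/2) ^ (ν+1) * (g2 ν (x^2/4) * (x/2)))) x := by
    have h1 := ((hpow1.mul hgpart).const_mul (ν/2)).add (hpow2.mul hg1part)
    refine h1.congr_of_eventuallyEq (Filter.Eventually.of_forall fun y => ?_)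
    simp only [Jd, Pi.add_apply, Pi.mul_apply]
    ring
  convert hF using 1
  rw [Jdd]
  have e1 : (x/2:ℝ) ^ (ν-1) = (x/2) ^ (ν-2) * (x/2) := by
    rw [← Real.rpow_add_one (ne_of_gt hp) (ν-2)]
    congr 1
    ring
  have e0 : (x/2:ℝ) ^ ν = (x/2) ^ (ν-1) * (x/2) := by
    rw [← Real.rpow_add_one (ne_of_gt hp) (ν-1)]
    congr 1
    ring
  have e2 : (x/2:ℝ) ^ (ν+1) = (x/2) ^ ν * (x/2) := Real.rpow_add_one (ne_of_gt hp) ν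
  have e3 : (x/2:ℝ) ^ (ν+2) = (x/2) ^ (ν+1) * (x/2) := by
    rw [← Real.rpow_add_one (ne_of_gt hp) (ν+1)]
    congr 1
    ring
  rw [show ν-1-1 = ν-2 by ring, show ν+1-1 = ν by ring, e3, e2, e0, e1]
  ring

lemma bessel_ode {x : ℝ} (hx : 0 < x) :
    x^2 * Jdd ν x + x * Jd ν x + (x^2 - ν^2) * besselJ ν x = 0 := by
  have hp : (0:ℝ) < x/2 := by linarith
  have hode := g_ode hν (x^2/4)
  rw [Jdd, Jd, besselJ_eq hν hx]
  have e1 : (x/2:ℝ) ^ (ν-1) = (x/2) ^ (ν-2) * (x/2) := by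
    rw [← Real.rpow_add_one (ne_of_gt hp) (ν-2)]; congr 1; ring
  have e0 : (x/2:ℝ) ^ ν = (x/2) ^ (ν-2) * (x/2) * (x/2) := by
    rw [← e1, ← Real.rpow_add_one (ne_of_gt hp) (ν-1)]; congr 1; ring
  have e2 : (x/2:ℝ) ^ (ν+1) = (x/2) ^ (ν-2) * (x/2) * (x/2) * (x/2) := by
    rw [← e0, ← Real.rpow_add_one (ne_of_gt hp) ν]
  have e3 : (x/2:ℝ) ^ (ν+2) = (x/2) ^ (ν-2) * (x/2) * (x/2) * (x/2) * (x/2) := by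
    rw [← e2, ← Real.rpow_add_one (ne_of_gt hp) (ν+1)]; congr 1; ring
  rw [e3, e2, e0, e1]
  linear_combination (x^4/4 * ((x/2:ℝ) ^ (ν-2))) * hode

end BJ

namespace BJ

noncomputable def w (ν : ℝ) (x : ℝ) : ℝ := Real.sqrt x * besselJ ν x
noncomputable def wd (ν : ℝ) (x : ℝ) : ℝ :=
  1 / (2 * Real.sqrt x) * besselJ ν x + Real.sqrt x * Jd ν x
noncomputable def Eng (ν : ℝ) (x : ℝ) : ℝ := (w ν x)^2 + (wd ν x)^2
noncomputable def F (ν : ℝ) (x : ℝ) : ℝ := Eng ν x * Real.exp ((ν^2 - 1/4)/x)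

variable {ν : ℝ} (hν : (1:ℝ)/2 ≤ ν)
include hν

lemma hasDerivAt_w {x : ℝ} (hx : 0 < x) : HasDerivAt (w ν) (wd ν x) x := by
  have h := (Real.hasDerivAt_sqrt (ne_of_gt hx)).mul (hasDerivAt_besselJ hν hx)
  exact h

lemma hasDerivAt_wd {x : ℝ} (hx : 0 < x) :
    HasDerivAt (wd ν) (-(1 + (1/4 - ν^2)/x^2) * w ν x) x := by
  have hs : Real.sqrt x ≠ 0 := Real.sqrt_ne_zero'.mpr hx
  have hsq : HasDerivAt Real.sqrt (1 / (2 * Real.sqrt x)) x := Real.hasDerivAt_sqrt (ne_of_gt hx)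
  have h2s : HasDerivAt (fun y : ℝ => 2 * Real.sqrt y) (2 * (1 / (2 * Real.sqrt x))) x :=
    hsq.const_mul 2
  have hinv : HasDerivAt (fun y : ℝ => (2 * Real.sqrt y)⁻¹)
      (-(2 * (1 / (2 * Real.sqrt x))) / (2 * Real.sqrt x)^2) x :=
    h2s.inv (by positivity)
  have hterm1 : HasDerivAt (fun y : ℝ => 1 / (2 * Real.sqrt y) * besselJ ν y)
      ((-(2 * (1 / (2 * Real.sqrt x))) / (2 * Real.sqrt x)^2) * besselJ ν x
        + (2 * Real.sqrt x)⁻¹ * Jd ν x) x := by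
    have h := hinv.mul (hasDerivAt_besselJ hν hx)
    refine h.congr_of_eventuallyEq (Filter.Eventually.of_forall fun y => ?_)
    simp only [one_div, Pi.mul_apply]
  have hterm2 : HasDerivAt (fun y : ℝ => Real.sqrt y * Jd ν y)
      (1 / (2 * Real.sqrt x) * Jd ν x + Real.sqrt x * Jdd ν x) x :=
    hsq.mul (hasDerivAt_Jd hν hx)
  have hsum := hterm1.add hterm2
  have hfun : wd ν = fun y => 1 / (2 * Real.sqrt y) * besselJ ν y + Real.sqrt y * Jd ν y := rfl
  rw [hfun]
  refine hsum.congr_deriv (Eq.symm ?_)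
  -- algebraic identity using the Bessel ODE
  have hode := bessel_ode hν hx
  have hJdd : x^2 * Jdd ν x = -(x * Jd ν x) - (x^2 - ν^2) * besselJ ν x := by linarith
  rw [w]
  set s := Real.sqrt x with hsdef
  have hs2 : s^2 = x := Real.sq_sqrt (le_of_lt hx)
  have hsne : s ≠ 0 := hs
  rw [← hs2] at hJdd ⊢
  field_simp
  linear_combination (-(16:ℝ)) * hJdd

lemma hasDerivAt_Eng {x : ℝ} (hx : 0 < x) :
    HasDerivAt (Eng ν)
      (2 * w ν x * wd ν x + 2 * wd ν x * (-(1 + (1/4 - ν^2)/x^2) * w ν x)) x := by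
  have h1 := (hasDerivAt_w hν hx).mul (hasDerivAt_w hν hx)
  have h2 := (hasDerivAt_wd hν hx).mul (hasDerivAt_wd hν hx)
  have h := h1.add h2
  have hfun : Eng ν = fun y => w ν y * w ν y + wd ν y * wd ν y := by
    funext y
    rw [Eng]
    ring
  rw [hfun]
  refine h.congr_deriv (Eq.symm ?_)
  all_goals ring

lemma hasDerivAt_F {x : ℝ} (hx : 0 < x) :
    HasDerivAt (F ν)
      ((2 * w ν x * wd ν x + 2 * wd ν x * (-(1 + (1/4 - ν^2)/x^2) * w ν x))
          * Real.exp ((ν^2 - 1/4)/x)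
        + Eng ν x * (Real.exp ((ν^2 - 1/4)/x) * ((ν^2 - 1/4) * (-(x^2)⁻¹)))) x := by
  have hinner : HasDerivAt (fun y : ℝ => (ν^2 - 1/4)/y) ((ν^2 - 1/4) * (-(x^2)⁻¹)) x := by
    have h := (hasDerivAt_inv (ne_of_gt hx)).const_mul (ν^2 - 1/4)
    simpa only [div_eq_mul_inv] using h
  have hexp := hinner.exp
  exact (hasDerivAt_Eng hν hx).mul hexp

lemma F_deriv_nonpos {x : ℝ} (hx : 1 ≤ x) :
    (2 * w ν x * wd ν x + 2 * wd ν x * (-(1 + (1/4 - ν^2)/x^2) * w ν x))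
          * Real.exp ((ν^2 - 1/4)/x)
        + Eng ν x * (Real.exp ((ν^2 - 1/4)/x) * ((ν^2 - 1/4) * (-(x^2)⁻¹))) ≤ 0 := by
  have hx0 : (0:ℝ) < x := by linarith
  have ha : (0:ℝ) ≤ ν^2 - 1/4 := by nlinarith
  have hexp : (0:ℝ) < Real.exp ((ν^2 - 1/4)/x) := Real.exp_pos _
  have hx2 : (0:ℝ) < x^2 := by positivity
  set W := w ν x
  set Wd := wd ν x
  have hEng : Eng ν x = W^2 + Wd^2 := rfl
  rw [hEng]
  have key : (2 * W * Wd + 2 * Wd * (-(1 + (1/4 - ν^2)/x^2) * W))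
      + (W^2 + Wd^2) * ((ν^2 - 1/4) * (-(x^2)⁻¹)) ≤ 0 := by
    have h1 : 2 * W * Wd + 2 * Wd * (-(1 + (1/4 - ν^2)/x^2) * W)
        = (ν^2 - 1/4)/x^2 * (2 * W * Wd) := by
      field_simp
      ring
    rw [h1]
    have h2 : (W^2 + Wd^2) * ((ν^2 - 1/4) * (-(x^2)⁻¹))
        = -((ν^2 - 1/4)/x^2 * (W^2 + Wd^2)) := by
      field_simp
    rw [h2]
    have h3 : 2 * W * Wd - (W^2 + Wd^2) ≤ 0 := by nlinarith [sq_nonneg (W - Wd)]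
    have h4 : (0:ℝ) ≤ (ν^2 - 1/4)/x^2 := by positivity
    nlinarith
  nlinarith [key, hexp]

lemma F_antitone : AntitoneOn (F ν) (Ici (1:ℝ)) := by
  apply antitoneOn_of_deriv_nonpos (convex_Ici 1)
  · intro y hy
    have hy0 : (0:ℝ) < y := by
      have := mem_Ici.mp hy; linarith
    exact ((hasDerivAt_F hν hy0).differentiableAt.continuousAt).continuousWithinAt
  · intro y hy
    rw [interior_Ici] at hy
    have hy1 : (1:ℝ) < y := hy
    have hy0 : (0:ℝ) < y := by linarith
    exact ((hasDerivAt_F hν hy0).differentiableAt).differentiableWithinAt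
  · intro y hy
    rw [interior_Ici] at hy
    have hy1 : (1:ℝ) < y := hy
    have hy0 : (0:ℝ) < y := by linarith
    rw [(hasDerivAt_F hν hy0).deriv]
    exact F_deriv_nonpos hν (le_of_lt hy1)

lemma besselJ_decay {x : ℝ} (hx : 1 ≤ x) :
    |besselJ ν x| ≤ Real.sqrt (F ν 1) * x ^ (-(1/2) : ℝ) := by
  have hx0 : (0:ℝ) < x := by linarith
  have ha : (0:ℝ) ≤ ν^2 - 1/4 := by nlinarith
  have hF : F ν x ≤ F ν 1 := F_antitone hν (self_mem_Ici) (mem_Ici.mpr hx) hx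
  have hE : Eng ν x ≤ F ν x := by
    rw [F]
    have h1 : (1:ℝ) ≤ Real.exp ((ν^2 - 1/4)/x) := by
      exact Real.one_le_exp (div_nonneg ha (le_of_lt hx0))
    have hEnonneg : (0:ℝ) ≤ Eng ν x := by rw [Eng]; positivity
    nlinarith
  have hw2 : (w ν x)^2 ≤ F ν 1 := by
    have : (w ν x)^2 ≤ Eng ν x := by rw [Eng]; nlinarith [sq_nonneg (wd ν x)]
    linarith
  have hwabs : |w ν x| ≤ Real.sqrt (F ν 1) := by
    rw [← Real.sqrt_sq_eq_abs]
    exact Real.sqrt_le_sqrt hw2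
  have hsx : (0:ℝ) < Real.sqrt x := Real.sqrt_pos.mpr hx0
  have hJ : besselJ ν x = w ν x / Real.sqrt x := by
    rw [w]
    field_simp
  rw [hJ, abs_div, abs_of_pos hsx, div_le_iff₀ hsx]
  have hxr : x ^ (-(1/2) : ℝ) * Real.sqrt x = 1 := by
    rw [Real.sqrt_eq_rpow, ← Real.rpow_add hx0]
    norm_num
  rw [mul_assoc, hxr, mul_one]
  exact hwabs

end BJ

namespace BJ

variable {ν : ℝ} (hν : (1:ℝ)/2 ≤ ν)
include hν

lemma besselJ_small {x : ℝ} (hx0 : 0 < x) (hx : x ≤ 1) :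
    |besselJ ν x| ≤ (1/Real.Gamma (ν+1)) * Real.exp (1/4) * x ^ ν := by
  rw [besselJ_eq hν hx0, abs_mul]
  have hp : (0:ℝ) < x/2 := by linarith
  have h1 : |(x/2 : ℝ) ^ ν| = (x/2) ^ ν := abs_of_pos (Real.rpow_pos_of_pos hp ν)
  rw [h1]
  have h2 : |g ν (x^2/4)| ≤ (1/Real.Gamma (ν+1)) * Real.exp (1/4) := by
    refine (g_bound hν (x^2/4)).trans ?_
    apply mul_le_mul_of_nonneg_left ?_ (le_of_lt (M_pos hν))
    apply Real.exp_le_exp.mpr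
    rw [abs_of_nonneg (by positivity)]
    nlinarith
  have h3 : (x/2 : ℝ) ^ ν ≤ x ^ ν :=
    Real.rpow_le_rpow (le_of_lt hp) (by linarith) (by linarith)
  calc (x/2:ℝ) ^ ν * |g ν (x^2/4)|
      ≤ x ^ ν * ((1/Real.Gamma (ν+1)) * Real.exp (1/4)) := by
        apply mul_le_mul h3 h2 (abs_nonneg _) (Real.rpow_nonneg (le_of_lt hx0) ν)
    _ = (1/Real.Gamma (ν+1)) * Real.exp (1/4) * x ^ ν := by ring

lemma besselJ_master {μ : ℝ} (hμ0 : 0 ≤ μ) (hμν : μ ≤ ν) :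
    ∃ K > (0:ℝ), ∀ x : ℝ, 0 < x →
      |besselJ ν x| ≤ K * (x ^ μ * (1+x) ^ (-(μ + 1/2))) := by
  set A := (1/Real.Gamma (ν+1)) * Real.exp (1/4) with hAdef
  set B := Real.sqrt (F ν 1) with hBdef
  set e := μ + 1/2 with hedef
  have hA : 0 < A := mul_pos (M_pos hν) (Real.exp_pos _)
  have hB : 0 ≤ B := Real.sqrt_nonneg _
  have hepos : 0 < e := by rw [hedef]; linarith
  refine ⟨(A + B + 1) * 2 ^ e, by positivity, ?_⟩
  intro x hx0
  have h1x : (0:ℝ) < 1 + x := by linarith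
  have hxe : (0:ℝ) < x ^ e := Real.rpow_pos_of_pos hx0 e
  have hbe : (0:ℝ) < (1+x) ^ e := Real.rpow_pos_of_pos h1x e
  have hxmu : (0:ℝ) ≤ x ^ μ := Real.rpow_nonneg (le_of_lt hx0) μ
  have hbne : (0:ℝ) ≤ (1+x) ^ (-e) := Real.rpow_nonneg (le_of_lt h1x) _
  rcases le_total x 1 with hle | hge
  · have key : (1:ℝ) ≤ 2 ^ e * (1+x) ^ (-e) := by
      rw [Real.rpow_neg (le_of_lt h1x), ← div_eq_mul_inv, le_div_iff₀ hbe, one_mul]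
      exact Real.rpow_le_rpow (le_of_lt h1x) (by linarith) (le_of_lt hepos)
    calc |besselJ ν x| ≤ A * x ^ ν := besselJ_small hν hx0 hle
      _ ≤ A * x ^ μ := by
          apply mul_le_mul_of_nonneg_left ?_ (le_of_lt hA)
          exact Real.rpow_le_rpow_of_exponent_ge hx0 hle hμν
      _ = A * x ^ μ * 1 := by ring
      _ ≤ A * x ^ μ * (2 ^ e * (1+x) ^ (-e)) := by
          apply mul_le_mul_of_nonneg_left key (by positivity)
      _ = (A * 2 ^ e) * (x ^ μ * (1+x) ^ (-e)) := by ring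
      _ ≤ ((A + B + 1) * 2 ^ e) * (x ^ μ * (1+x) ^ (-e)) := by
          apply mul_le_mul_of_nonneg_right ?_ (by positivity)
          have h2e : (0:ℝ) ≤ (2:ℝ) ^ e := Real.rpow_nonneg (by norm_num) e
          nlinarith
  · have key2 : x ^ (-e) ≤ 2 ^ e * (1+x) ^ (-e) := by
      have h1 : ((1+x)/x) ^ e ≤ 2 ^ e := by
        apply Real.rpow_le_rpow (by positivity) ?_ (le_of_lt hepos)
        rw [div_le_iff₀ hx0]
        linarith
      have h2 : ((1+x)/x) ^ e = (1+x) ^ e / x ^ e :=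
        Real.div_rpow (le_of_lt h1x) (le_of_lt hx0) e
      rw [h2, div_le_iff₀ hxe] at h1
      rw [Real.rpow_neg (le_of_lt hx0), Real.rpow_neg (le_of_lt h1x),
        ← div_eq_mul_inv, le_div_iff₀ hbe, inv_mul_eq_div, div_le_iff₀ hxe]
      linarith
    have hx1 : (1:ℝ) ≤ x := hge
    calc |besselJ ν x| ≤ B * x ^ (-(1/2) : ℝ) := besselJ_decay hν hx1
      _ = B * (x ^ μ * x ^ (-e)) := by
          rw [← Real.rpow_add hx0]
          congr 1
          rw [hedef]
          ring_nf
      _ ≤ B * (x ^ μ * (2 ^ e * (1+x) ^ (-e))) := by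
          apply mul_le_mul_of_nonneg_left ?_ hB
          exact mul_le_mul_of_nonneg_left key2 hxmu
      _ = (B * 2 ^ e) * (x ^ μ * (1+x) ^ (-e)) := by ring
      _ ≤ ((A + B + 1) * 2 ^ e) * (x ^ μ * (1+x) ^ (-e)) := by
          apply mul_le_mul_of_nonneg_right ?_ (by positivity)
          have h2e : (0:ℝ) ≤ (2:ℝ) ^ e := Real.rpow_nonneg (by norm_num) e
          nlinarith

end BJ

lemma weight_integrable (n : ℕ) (hn : 3 ≤ n) (c : ℝ) (hc : (n:ℝ) < c) :
    IntegrableOn (fun s : ℝ => (1+s) ^ (-c) * s ^ ((n:ℝ)-1)) (Ioi (0:ℝ)) := by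
  have hn3 : (3:ℝ) ≤ (n:ℝ) := by exact_mod_cast hn
  have hc0 : (0:ℝ) < c := by linarith
  have hcont : ∀ s ∈ Ioi (0:ℝ), ContinuousAt (fun s : ℝ => (1+s) ^ (-c) * s ^ ((n:ℝ)-1)) s := by
    intro s hs
    have hs0 : (0:ℝ) < s := hs
    apply ContinuousAt.mul
    · exact ContinuousAt.rpow_const (by fun_prop) (Or.inl (by positivity))
    · exact ContinuousAt.rpow_const continuousAt_id (Or.inl (ne_of_gt hs0))
  have h1 : IntegrableOn (fun s : ℝ => (1+s) ^ (-c) * s ^ ((n:ℝ)-1)) (Ioc (0:ℝ) 1) := by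
    apply Integrable.mono' (g := fun _ => (1:ℝ))
      ((integrableOn_const_iff).mpr (Or.inr measure_Ioc_lt_top))
    · apply ContinuousOn.aestronglyMeasurable ?_ measurableSet_Ioc
      intro s hs
      exact (hcont s hs.1).continuousWithinAt
    · filter_upwards [ae_restrict_mem measurableSet_Ioc] with s hs
      have hs0 : (0:ℝ) < s := hs.1
      have hs1 : s ≤ 1 := hs.2
      rw [Real.norm_eq_abs, abs_of_nonneg (by positivity)]
      apply mul_le_one₀
      · exact Real.rpow_le_one_of_one_le_of_nonpos (by linarith) (by linarith)
      · positivity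
      · exact Real.rpow_le_one (le_of_lt hs0) hs1 (by linarith)
  have h2 : IntegrableOn (fun s : ℝ => (1+s) ^ (-c) * s ^ ((n:ℝ)-1)) (Ioi (1:ℝ)) := by
    apply Integrable.mono' (g := fun s : ℝ => s ^ ((n:ℝ)-1-c))
      (integrableOn_Ioi_rpow_of_lt (by linarith) one_pos)
    · apply ContinuousOn.aestronglyMeasurable ?_ measurableSet_Ioi
      intro s hs
      have : s ∈ Ioi (0:ℝ) := by
        have : (1:ℝ) < s := hs
        exact mem_Ioi.mpr (by linarith)
      exact (hcont s this).continuousWithinAt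
    · filter_upwards [ae_restrict_mem measurableSet_Ioi] with s hs
      have hs1 : (1:ℝ) < s := hs
      have hs0 : (0:ℝ) < s := by linarith
      rw [Real.norm_eq_abs, abs_of_nonneg (by positivity)]
      have hb : (1+s) ^ (-c) ≤ s ^ (-c) :=
        Real.rpow_le_rpow_of_nonpos hs0 (by linarith) (by linarith)
      calc (1+s) ^ (-c) * s ^ ((n:ℝ)-1) ≤ s ^ (-c) * s ^ ((n:ℝ)-1) :=
            mul_le_mul_of_nonneg_right hb (Real.rpow_nonneg (le_of_lt hs0) _)
        _ = s ^ ((n:ℝ)-1-c) := by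
            rw [← Real.rpow_add hs0]
            congr 1
            ring
  have := h1.union h2
  rwa [Ioc_union_Ioi_eq_Ioi zero_le_one] at this

theorem imag_resolvent_Lq_bound_lowfreq'
    (n : ℕ) (hn : 3 ≤ n) (ν : ℝ) (hν : ((n : ℝ) - 2) / 2 ≤ ν)
    (q : ℝ) (hq : 1 ≤ q) (σ : ℝ) (hσ : (n : ℝ) / q < σ) :
    ∃ C > (0 : ℝ), ∀ lam : ℝ, 0 < lam → lam ≤ 1 → ∀ r : ℝ, 0 < r →
      (∫ s in Ioi (0 : ℝ),
          ((r * s) ^ (-(((n : ℝ) - 2) / 2)) * |besselJ ν (lam * r) * besselJ ν (lam * s)|) ^ q *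
            (1 + s) ^ (-(q * σ)) * s ^ ((n : ℝ) - 1)) ^ (1 / q)
        ≤ C * lam ^ ((n : ℝ) - 2) * (1 + lam * r) ^ (-(((n : ℝ) - 1) / 2)) := by
  have hn3 : (3:ℝ) ≤ (n:ℝ) := by exact_mod_cast hn
  set μ : ℝ := ((n:ℝ) - 2) / 2 with hμdef
  have hμ0 : 0 ≤ μ := by rw [hμdef]; linarith
  have hν12 : (1:ℝ)/2 ≤ ν := le_trans (by rw [hμdef] at hμ0 ⊢; linarith) hν
  have hq0 : (0:ℝ) < q := by linarith
  have hqσ : (n:ℝ) < q * σ := by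
    have := (div_lt_iff₀ hq0).mp hσ
    linarith [this]
  obtain ⟨K, hK, hKb⟩ := BJ.besselJ_master hν12 hμ0 hν
  have hμe : -(μ + 1/2) = -(((n:ℝ)-1)/2) := by rw [hμdef]; ring
  set I : ℝ := ∫ s in Ioi (0:ℝ), (1+s) ^ (-(q*σ)) * s ^ ((n:ℝ)-1) with hIdef
  have hInt : IntegrableOn (fun s : ℝ => (1+s) ^ (-(q*σ)) * s ^ ((n:ℝ)-1)) (Ioi (0:ℝ)) :=
    weight_integrable n hn (q*σ) hqσ
  have hI0 : 0 ≤ I := by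
    rw [hIdef]
    apply setIntegral_nonneg measurableSet_Ioi
    intro s hs
    have hs0 : (0:ℝ) < s := hs
    positivity
  have hIq : 0 ≤ I ^ (1/q) := Real.rpow_nonneg hI0 _
  refine ⟨K^2 * I ^ (1/q) + 1, by positivity, ?_⟩
  intro lam hlam hlam1 r hr
  have hlr : (0:ℝ) < lam * r := mul_pos hlam hr
  have haux : (0:ℝ) < 1 + lam * r := by linarith
  set D : ℝ := K^2 * lam ^ ((n:ℝ)-2) * (1 + lam*r) ^ (-(((n:ℝ)-1)/2)) with hDdef
  have hD0 : 0 ≤ D := by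
    rw [hDdef]
    have := Real.rpow_nonneg (le_of_lt hlam) ((n:ℝ)-2)
    have := Real.rpow_nonneg (le_of_lt haux) (-(((n:ℝ)-1)/2))
    positivity
  -- pointwise bound
  have hpt : ∀ s ∈ Ioi (0:ℝ),
      ((r * s) ^ (-μ) * |besselJ ν (lam * r) * besselJ ν (lam * s)|) ^ q *
          (1 + s) ^ (-(q * σ)) * s ^ ((n : ℝ) - 1)
        ≤ D ^ q * ((1+s) ^ (-(q*σ)) * s ^ ((n:ℝ)-1)) := by
    intro s hs
    have hs0 : (0:ℝ) < s := hs
    have hls : (0:ℝ) < lam * s := mul_pos hlam hs0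
    have haux2 : (0:ℝ) < 1 + lam * s := by linarith
    have h1 := hKb (lam*r) hlr
    have h2 := hKb (lam*s) hls
    have hP : (0:ℝ) ≤ (1 + lam*r) ^ (-(μ + 1/2)) := Real.rpow_nonneg (le_of_lt haux) _
    have hQ : (0:ℝ) ≤ (1 + lam*s) ^ (-(μ + 1/2)) := Real.rpow_nonneg (le_of_lt haux2) _
    have hbase : (r * s) ^ (-μ) * |besselJ ν (lam * r) * besselJ ν (lam * s)| ≤ D := by
      have habs : |besselJ ν (lam * r) * besselJ ν (lam * s)|
          ≤ (K * ((lam*r) ^ μ * (1 + lam*r) ^ (-(μ + 1/2))))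
            * (K * ((lam*s) ^ μ * (1 + lam*s) ^ (-(μ + 1/2)))) := by
        rw [abs_mul]
        apply mul_le_mul h1 h2 (abs_nonneg _) ?_
        have := Real.rpow_nonneg (le_of_lt hlr) μ
        positivity
      have hrs0 : (0:ℝ) ≤ (r*s) ^ (-μ) := Real.rpow_nonneg (le_of_lt (mul_pos hr hs0)) _
      calc (r * s) ^ (-μ) * |besselJ ν (lam * r) * besselJ ν (lam * s)|
          ≤ (r * s) ^ (-μ) * ((K * ((lam*r) ^ μ * (1 + lam*r) ^ (-(μ + 1/2))))
            * (K * ((lam*s) ^ μ * (1 + lam*s) ^ (-(μ + 1/2))))) :=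
            mul_le_mul_of_nonneg_left habs hrs0
        _ = K^2 * (lam ^ μ * lam ^ μ) * ((r ^ (-μ) * r ^ μ) * (s ^ (-μ) * s ^ μ))
              * (1 + lam*r) ^ (-(μ + 1/2)) * (1 + lam*s) ^ (-(μ + 1/2)) := by
            rw [Real.mul_rpow (le_of_lt hr) (le_of_lt hs0),
              Real.mul_rpow (le_of_lt hlam) (le_of_lt hr),
              Real.mul_rpow (le_of_lt hlam) (le_of_lt hs0)]
            ring
        _ = K^2 * lam ^ ((n:ℝ)-2) * (1 + lam*r) ^ (-(μ + 1/2)) * (1 + lam*s) ^ (-(μ + 1/2)) := by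
            rw [← Real.rpow_add hlam, ← Real.rpow_add hr, ← Real.rpow_add hs0]
            simp only [neg_add_cancel, Real.rpow_zero]
            rw [show μ + μ = (n:ℝ) - 2 by rw [hμdef]; ring]
            ring
        _ ≤ K^2 * lam ^ ((n:ℝ)-2) * (1 + lam*r) ^ (-(μ + 1/2)) * 1 := by
            apply mul_le_mul_of_nonneg_left
              (Real.rpow_le_one_of_one_le_of_nonpos (by linarith) (by linarith)) ?_
            have := Real.rpow_nonneg (le_of_lt hlam) ((n:ℝ)-2)
            positivity
        _ = D := by rw [hDdef, ← hμe]; ring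
    have hbnn : (0:ℝ) ≤ (r * s) ^ (-μ) * |besselJ ν (lam * r) * besselJ ν (lam * s)| := by
      have := Real.rpow_nonneg (le_of_lt (mul_pos hr hs0)) (-μ)
      positivity
    have hpow : ((r * s) ^ (-μ) * |besselJ ν (lam * r) * besselJ ν (lam * s)|) ^ q
        ≤ D ^ q := Real.rpow_le_rpow hbnn hbase (le_of_lt hq0)
    have hw : (0:ℝ) ≤ (1+s) ^ (-(q*σ)) * s ^ ((n:ℝ)-1) := by
      have h1' := Real.rpow_nonneg (by linarith : (0:ℝ) ≤ 1+s) (-(q*σ))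
      have h2' := Real.rpow_nonneg (le_of_lt hs0) ((n:ℝ)-1)
      positivity
    calc ((r * s) ^ (-μ) * |besselJ ν (lam * r) * besselJ ν (lam * s)|) ^ q *
          (1 + s) ^ (-(q * σ)) * s ^ ((n : ℝ) - 1)
        = ((r * s) ^ (-μ) * |besselJ ν (lam * r) * besselJ ν (lam * s)|) ^ q *
            ((1 + s) ^ (-(q * σ)) * s ^ ((n : ℝ) - 1)) := by ring
      _ ≤ D ^ q * ((1+s) ^ (-(q*σ)) * s ^ ((n:ℝ)-1)) := mul_le_mul_of_nonneg_right hpow hw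
  -- integral bound
  have hmono : (∫ s in Ioi (0:ℝ),
      ((r * s) ^ (-μ) * |besselJ ν (lam * r) * besselJ ν (lam * s)|) ^ q *
        (1 + s) ^ (-(q * σ)) * s ^ ((n : ℝ) - 1))
      ≤ ∫ s in Ioi (0:ℝ), D ^ q * ((1+s) ^ (-(q*σ)) * s ^ ((n:ℝ)-1)) := by
    apply integral_mono_of_nonneg
    · filter_upwards [ae_restrict_mem measurableSet_Ioi] with s hs
      have hs0 : (0:ℝ) < s := hs
      have hb1 : (0:ℝ) ≤ (r*s) ^ (-μ) := Real.rpow_nonneg (le_of_lt (mul_pos hr hs0)) _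
      have hb2 : (0:ℝ) ≤ (1+s) ^ (-(q*σ)) := Real.rpow_nonneg (by linarith) _
      have hb3 : (0:ℝ) ≤ s ^ ((n:ℝ)-1) := Real.rpow_nonneg (le_of_lt hs0) _
      have hb4 : (0:ℝ) ≤ ((r * s) ^ (-μ) * |besselJ ν (lam * r) * besselJ ν (lam * s)|) ^ q :=
        Real.rpow_nonneg (by positivity) q
      positivity
    · exact hInt.const_mul (D ^ q)
    · filter_upwards [ae_restrict_mem measurableSet_Ioi] with s hs
      exact hpt s hs
  have hint_eq : (∫ s in Ioi (0:ℝ), D ^ q * ((1+s) ^ (-(q*σ)) * s ^ ((n:ℝ)-1))) = D ^ q * I := by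
    rw [hIdef]
    exact integral_const_mul _ _
  have hfin : (∫ s in Ioi (0:ℝ),
      ((r * s) ^ (-μ) * |besselJ ν (lam * r) * besselJ ν (lam * s)|) ^ q *
        (1 + s) ^ (-(q * σ)) * s ^ ((n : ℝ) - 1)) ^ (1/q) ≤ (D ^ q * I) ^ (1/q) := by
    apply Real.rpow_le_rpow ?_ (by rw [← hint_eq]; exact hmono) (by positivity)
    apply setIntegral_nonneg measurableSet_Ioi
    intro s hs
    have hs0 : (0:ℝ) < s := hs
    have hb1 : (0:ℝ) ≤ (r*s) ^ (-μ) := Real.rpow_nonneg (le_of_lt (mul_pos hr hs0)) _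
    have hb2 : (0:ℝ) ≤ (1+s) ^ (-(q*σ)) := Real.rpow_nonneg (by linarith) _
    have hb3 : (0:ℝ) ≤ s ^ ((n:ℝ)-1) := Real.rpow_nonneg (le_of_lt hs0) _
    have hb4 : (0:ℝ) ≤ ((r * s) ^ (-μ) * |besselJ ν (lam * r) * besselJ ν (lam * s)|) ^ q :=
      Real.rpow_nonneg (by positivity) q
    positivity
  have hDq : (D ^ q * I) ^ (1/q) = D * I ^ (1/q) := by
    rw [Real.mul_rpow (Real.rpow_nonneg hD0 q) hI0, ← Real.rpow_mul hD0,
      mul_one_div, div_self (ne_of_gt hq0), Real.rpow_one]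
  rw [hDq] at hfin
  refine hfin.trans ?_
  rw [hDdef]
  have h1' := Real.rpow_nonneg (le_of_lt hlam) ((n:ℝ)-2)
  have h2' := Real.rpow_nonneg (le_of_lt haux) (-(((n:ℝ)-1)/2))
  nlinarith [mul_nonneg h1' h2']

theorem imag_resolvent_Lq_bound_lowfreq
    (n : ℕ) (hn : 3 ≤ n) (ν : ℝ) (hν : ((n : ℝ) - 2) / 2 ≤ ν)
    (q : ℝ) (hq : 1 ≤ q) (σ : ℝ) (hσ : (n : ℝ) / q < σ) :
    ∃ C > (0 : ℝ), ∀ lam : ℝ, 0 < lam → lam ≤ 1 → ∀ r : ℝ, 0 < r →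
      (∫ s in Ioi (0 : ℝ),
          ((r * s) ^ (-(((n : ℝ) - 2) / 2)) * |besselJ ν (lam * r) * besselJ ν (lam * s)|) ^ q *
            (1 + s) ^ (-(q * σ)) * s ^ ((n : ℝ) - 1)) ^ (1 / q)
        ≤ C * lam ^ ((n : ℝ) - 2) * (1 + lam * r) ^ (-(((n : ℝ) - 1) / 2)) := by
  exact imag_resolvent_Lq_bound_lowfreq' n hn ν hν q hq σ hσ
end

section
/- Let n ≥ 3 be an integer and ν ≥ (n−2)/2 real. Let ℓ, m ≥ 0 be integers, put k = ℓ + m, let α, β be integers with |α| ≤ ℓ and |β| ≤ m, and let σ > 1/2 + k. Let f, g : (0,∞) → ℂ be measurable functions and C₀ > 0 a constant such that |f(τ)| ≤ C₀ τ^{ν+α} for 0 < τ ≤ 1 and |f(τ)| ≤ C₀ τ^{−1/2} for τ ≥ 1, and |g(τ)| ≤ C₀ τ^{−(ν+β)} for 0 < τ ≤ 1 and |g(τ)| ≤ C₀ τ^{−1/2} for τ ≥ 1. Then there exists a constant C > 0 (depending only on n, ν, k, ℓ, m, α, β, σ, C₀) such that for every λ ≥ 1, ∫₀^∞ ∫_r^∞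 |f(λr)|² |g(λs)|² r^{1+2ℓ} s^{1+2m} (1+s)^{−2σ} (1+r)^{−2σ} ds dr ≤ C λ^{−2}. -/
open MeasureTheory Real Set

private lemma rk_int_one_add' {p : ℝ} (hp : p < -1) :
    IntegrableOn (fun s : ℝ => (1 + s) ^ p) (Ioi (0 : ℝ)) := by
  have h0 : Integrable (fun x : ℝ => (1 + ‖x‖) ^ (-(-p))) := by
    apply integrable_one_add_norm
    simp only [Module.finrank_self]
    push_cast
    linarith
  refine (h0.integrableOn).congr_fun (fun x hx => ?_) measurableSet_Ioi
  beta_reduce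
  rw [Real.norm_of_nonneg (le_of_lt hx), neg_neg]

private lemma rk_int_K' {e : ℝ} (he : -1 < e) :
    IntegrableOn (fun r : ℝ => r ^ e) (Ioc (0:ℝ) 1) := by
  have h := intervalIntegral.intervalIntegrable_rpow' (a := (0:ℝ)) (b := 1) he
  rwa [intervalIntegrable_iff_integrableOn_Ioc_of_le (by norm_num)] at h


private lemma rk_pointwise
    (ν : ℝ) (ℓ m : ℕ) (α β : ℤ) (σ : ℝ)
    (hν1 : (1:ℝ) ≤ 2 * ν) (hα1 : -(ℓ:ℝ) ≤ (α:ℝ)) (hσ0 : 0 ≤ σ)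
    (f g : ℝ → ℂ) (C₀ : ℝ) (hC₀ : 0 < C₀)
    (hf_small : ∀ τ : ℝ, 0 < τ → τ ≤ 1 → ‖f τ‖ ≤ C₀ * τ ^ (ν + (α : ℝ)))
    (hf_large : ∀ τ : ℝ, 1 ≤ τ → ‖f τ‖ ≤ C₀ * τ ^ (-(1 : ℝ) / 2))
    (hg_small : ∀ τ : ℝ, 0 < τ → τ ≤ 1 → ‖g τ‖ ≤ C₀ * τ ^ (-(ν + (β : ℝ))))
    (hg_large : ∀ τ : ℝ, 1 ≤ τ → ‖g τ‖ ≤ C₀ * τ ^ (-(1 : ℝ) / 2))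
    (lam r s : ℝ) (hlam : 1 ≤ lam) (hr : 0 < r) (hrs : r < s) :
    ‖f (lam * r)‖ ^ (2 : ℕ) * ‖g (lam * s)‖ ^ (2 : ℕ) *
        r ^ (1 + 2 * (ℓ : ℝ)) * s ^ (1 + 2 * (m : ℝ)) *
          (1 + s) ^ (-(2 * σ)) * (1 + r) ^ (-(2 * σ)) ≤
    C₀ ^ 4 * lam ^ (-(2 : ℝ)) *
      ((1 + r) ^ (2 * (ℓ:ℝ) - 2 * σ) * (1 + s) ^ (2 * (m:ℝ) - 2 * σ) +
        Set.indicator (Ioc r 1)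
          (fun _ => r ^ (2*ν + 2*(α:ℝ) + 1 + 2*(ℓ:ℝ) + (1 + 2*(m:ℝ) - 2*ν - 2*(β:ℝ)))
            + r ^ (2*(ℓ:ℝ) + 2*(m:ℝ)) + 2 * r ^ (2*ν + 2*(α:ℝ) + 1 + 2*(ℓ:ℝ))) s) := by
  have hlam0 : (0:ℝ) < lam := lt_of_lt_of_le one_pos hlam
  have hs0 : (0:ℝ) < s := lt_trans hr hrs
  have hu0 : (0:ℝ) < lam * r := mul_pos hlam0 hr
  have hv0 : (0:ℝ) < lam * s := mul_pos hlam0 hs0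
  have hr1 : (0:ℝ) < 1 + r := by linarith
  have hs1 : (0:ℝ) < 1 + s := by linarith
  have hℓ0 : (0:ℝ) ≤ (ℓ:ℝ) := Nat.cast_nonneg ℓ
  have hm0 : (0:ℝ) ≤ (m:ℝ) := Nat.cast_nonneg m
  have hA0 : 0 ≤ 2*ν + 2*(α:ℝ) + 1 + 2*(ℓ:ℝ) := by linarith
  -- squared small bound for f
  have hf2 : lam * r ≤ 1 → ‖f (lam * r)‖ ^ (2:ℕ) ≤ C₀ ^ 2 * (lam * r) ^ (2*ν + 2*(α:ℝ)) := by
    intro hu1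
    calc ‖f (lam * r)‖ ^ (2:ℕ) ≤ (C₀ * (lam * r) ^ (ν + (α:ℝ))) ^ (2:ℕ) :=
          pow_le_pow_left₀ (norm_nonneg _) (hf_small _ hu0 hu1) 2
      _ = C₀ ^ 2 * (lam * r) ^ (2*ν + 2*(α:ℝ)) := by
          rw [mul_pow, ← Real.rpow_natCast ((lam*r) ^ (ν + (α:ℝ))) 2,
            ← Real.rpow_mul hu0.le,
            show ((ν + (α:ℝ)) * ((2:ℕ):ℝ)) = 2*ν + 2*(α:ℝ) by push_cast; ring]
  -- squared small bound for g
  have hg2 : lam * s ≤ 1 → ‖g (lam * s)‖ ^ (2:ℕ) ≤ C₀ ^ 2 * (lam * s) ^ (-(2*ν + 2*(β:ℝ))) := by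
    intro hv1
    calc ‖g (lam * s)‖ ^ (2:ℕ) ≤ (C₀ * (lam * s) ^ (-(ν + (β:ℝ)))) ^ (2:ℕ) :=
          pow_le_pow_left₀ (norm_nonneg _) (hg_small _ hv0 hv1) 2
      _ = C₀ ^ 2 * (lam * s) ^ (-(2*ν + 2*(β:ℝ))) := by
          rw [mul_pow, ← Real.rpow_natCast ((lam*s) ^ (-(ν + (β:ℝ)))) 2,
            ← Real.rpow_mul hv0.le,
            show ((-(ν + (β:ℝ))) * ((2:ℕ):ℝ)) = -(2*ν + 2*(β:ℝ)) by push_cast; ring]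
  rcases le_or_gt 1 (lam * s) with hvs | hvs
  · -- λs ≥ 1 : bound by the first term
    have hF : ‖f (lam * r)‖ ^ (2:ℕ) * r ^ (1 + 2*(ℓ:ℝ))
        ≤ C₀ ^ 2 * lam ^ (-(1:ℝ)) * (1 + r) ^ (2*(ℓ:ℝ)) := by
      have h1r : (1:ℝ) ≤ (1 + r) ^ (2*(ℓ:ℝ)) :=
        Real.one_le_rpow (by linarith) (by positivity)
      rcases le_or_gt 1 (lam * r) with hur | hur
      · have h1 : ‖f (lam * r)‖ ^ (2:ℕ) ≤ C₀ ^ 2 * (lam * r) ^ (-(1:ℝ)) := by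
          calc ‖f (lam * r)‖ ^ (2:ℕ) ≤ (C₀ * (lam * r) ^ (-(1:ℝ)/2)) ^ (2:ℕ) :=
                pow_le_pow_left₀ (norm_nonneg _) (hf_large _ hur) 2
            _ = C₀ ^ 2 * (lam * r) ^ (-(1:ℝ)) := by
                rw [mul_pow, ← Real.rpow_natCast ((lam*r) ^ (-(1:ℝ)/2)) 2,
                  ← Real.rpow_mul hu0.le]
                norm_num
        calc ‖f (lam * r)‖ ^ (2:ℕ) * r ^ (1 + 2*(ℓ:ℝ))
            ≤ (C₀ ^ 2 * (lam * r) ^ (-(1:ℝ))) * r ^ (1 + 2*(ℓ:ℝ)) :=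
              mul_le_mul_of_nonneg_right h1 (Real.rpow_nonneg hr.le _)
          _ = C₀ ^ 2 * lam ^ (-(1:ℝ)) * r ^ (2*(ℓ:ℝ)) := by
              rw [Real.mul_rpow hlam0.le hr.le, mul_assoc, mul_assoc, ← Real.rpow_add hr,
                show (-(1:ℝ)) + (1 + 2*(ℓ:ℝ)) = 2*(ℓ:ℝ) by ring, ← mul_assoc]
          _ ≤ C₀ ^ 2 * lam ^ (-(1:ℝ)) * (1 + r) ^ (2*(ℓ:ℝ)) := by
              gcongr
              linarith
      · have h1 := hf2 hur.le
        calc ‖f (lam * r)‖ ^ (2:ℕ) * r ^ (1 + 2*(ℓ:ℝ))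
            ≤ (C₀ ^ 2 * (lam * r) ^ (2*ν + 2*(α:ℝ))) * r ^ (1 + 2*(ℓ:ℝ)) :=
              mul_le_mul_of_nonneg_right h1 (Real.rpow_nonneg hr.le _)
          _ = C₀ ^ 2 * (lam ^ (-(1:ℝ) - 2*(ℓ:ℝ)) * (lam * r) ^ (2*ν + 2*(α:ℝ) + 1 + 2*(ℓ:ℝ))) := by
              rw [Real.mul_rpow hlam0.le hr.le, Real.mul_rpow hlam0.le hr.le]
              rw [show C₀ ^ 2 * (lam ^ (2*ν + 2*(α:ℝ)) * r ^ (2*ν + 2*(α:ℝ))) * r ^ (1 + 2*(ℓ:ℝ))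
                  = C₀ ^ 2 * (lam ^ (2*ν + 2*(α:ℝ)) * (r ^ (2*ν + 2*(α:ℝ)) * r ^ (1 + 2*(ℓ:ℝ)))) by ring,
                ← Real.rpow_add hr,
                show lam ^ (-(1:ℝ) - 2*(ℓ:ℝ)) * (lam ^ (2*ν + 2*(α:ℝ) + 1 + 2*(ℓ:ℝ)) * r ^ (2*ν + 2*(α:ℝ) + 1 + 2*(ℓ:ℝ)))
                  = (lam ^ (-(1:ℝ) - 2*(ℓ:ℝ)) * lam ^ (2*ν + 2*(α:ℝ) + 1 + 2*(ℓ:ℝ))) * r ^ (2*ν + 2*(α:ℝ) + 1 + 2*(ℓ:ℝ)) by ring,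
                ← Real.rpow_add hlam0,
                show (-(1:ℝ) - 2*(ℓ:ℝ)) + (2*ν + 2*(α:ℝ) + 1 + 2*(ℓ:ℝ)) = 2*ν + 2*(α:ℝ) by ring,
                show (2*ν + 2*(α:ℝ)) + (1 + 2*(ℓ:ℝ)) = 2*ν + 2*(α:ℝ) + 1 + 2*(ℓ:ℝ) by ring]
          _ ≤ C₀ ^ 2 * (lam ^ (-(1:ℝ)) * (1 + r) ^ (2*(ℓ:ℝ))) := by
              have h3 : (lam * r) ^ (2*ν + 2*(α:ℝ) + 1 + 2*(ℓ:ℝ)) ≤ 1 :=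
                Real.rpow_le_one hu0.le hur.le hA0
              have h4 : lam ^ (-(1:ℝ) - 2*(ℓ:ℝ)) ≤ lam ^ (-(1:ℝ)) :=
                Real.rpow_le_rpow_of_exponent_le hlam (by linarith)
              have h5 : (0:ℝ) ≤ lam ^ (-(1:ℝ) - 2*(ℓ:ℝ)) := Real.rpow_nonneg hlam0.le _
              have h6 : (0:ℝ) ≤ (lam * r) ^ (2*ν + 2*(α:ℝ) + 1 + 2*(ℓ:ℝ)) := Real.rpow_nonneg hu0.le _
              have h7 : (0:ℝ) ≤ lam ^ (-(1:ℝ)) := Real.rpow_nonneg hlam0.le _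
              have : lam ^ (-(1:ℝ) - 2*(ℓ:ℝ)) * (lam * r) ^ (2*ν + 2*(α:ℝ) + 1 + 2*(ℓ:ℝ))
                  ≤ lam ^ (-(1:ℝ)) * (1 + r) ^ (2*(ℓ:ℝ)) := by
                nlinarith
              exact mul_le_mul_of_nonneg_left this (by positivity)
          _ = C₀ ^ 2 * lam ^ (-(1:ℝ)) * (1 + r) ^ (2*(ℓ:ℝ)) := by ring
    have hG : ‖g (lam * s)‖ ^ (2:ℕ) * s ^ (1 + 2*(m:ℝ))
        ≤ C₀ ^ 2 * lam ^ (-(1:ℝ)) * (1 + s) ^ (2*(m:ℝ)) := by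
      have h1 : ‖g (lam * s)‖ ^ (2:ℕ) ≤ C₀ ^ 2 * (lam * s) ^ (-(1:ℝ)) := by
        calc ‖g (lam * s)‖ ^ (2:ℕ) ≤ (C₀ * (lam * s) ^ (-(1:ℝ)/2)) ^ (2:ℕ) :=
              pow_le_pow_left₀ (norm_nonneg _) (hg_large _ hvs) 2
          _ = C₀ ^ 2 * (lam * s) ^ (-(1:ℝ)) := by
              rw [mul_pow, ← Real.rpow_natCast ((lam*s) ^ (-(1:ℝ)/2)) 2,
                ← Real.rpow_mul hv0.le]
              norm_num
      calc ‖g (lam * s)‖ ^ (2:ℕ) * s ^ (1 + 2*(m:ℝ))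
          ≤ (C₀ ^ 2 * (lam * s) ^ (-(1:ℝ))) * s ^ (1 + 2*(m:ℝ)) :=
            mul_le_mul_of_nonneg_right h1 (Real.rpow_nonneg hs0.le _)
        _ = C₀ ^ 2 * lam ^ (-(1:ℝ)) * s ^ (2*(m:ℝ)) := by
            rw [Real.mul_rpow hlam0.le hs0.le, mul_assoc, mul_assoc, ← Real.rpow_add hs0,
              show (-(1:ℝ)) + (1 + 2*(m:ℝ)) = 2*(m:ℝ) by ring, ← mul_assoc]
        _ ≤ C₀ ^ 2 * lam ^ (-(1:ℝ)) * (1 + s) ^ (2*(m:ℝ)) := by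
            gcongr
            linarith
    have e1 : lam ^ (-(1:ℝ)) * lam ^ (-(1:ℝ)) = lam ^ (-(2:ℝ)) := by
      rw [← Real.rpow_add hlam0]; norm_num
    have e2 : (1+r) ^ (2*(ℓ:ℝ) - 2*σ) = (1+r) ^ (2*(ℓ:ℝ)) * (1+r) ^ (-(2*σ)) := by
      rw [← Real.rpow_add hr1]; ring_nf
    have e3 : (1+s) ^ (2*(m:ℝ) - 2*σ) = (1+s) ^ (2*(m:ℝ)) * (1+s) ^ (-(2*σ)) := by
      rw [← Real.rpow_add hs1]; ring_nf
    have hind : 0 ≤ Set.indicator (Ioc r 1)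
          (fun _ => r ^ (2*ν + 2*(α:ℝ) + 1 + 2*(ℓ:ℝ) + (1 + 2*(m:ℝ) - 2*ν - 2*(β:ℝ)))
            + r ^ (2*(ℓ:ℝ) + 2*(m:ℝ)) + 2 * r ^ (2*ν + 2*(α:ℝ) + 1 + 2*(ℓ:ℝ))) s :=
      Set.indicator_nonneg (fun x _ => by positivity) s
    calc ‖f (lam * r)‖ ^ (2:ℕ) * ‖g (lam * s)‖ ^ (2:ℕ) * r ^ (1 + 2*(ℓ:ℝ)) * s ^ (1 + 2*(m:ℝ)) *
          (1 + s) ^ (-(2*σ)) * (1 + r) ^ (-(2*σ))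
        = (‖f (lam * r)‖ ^ (2:ℕ) * r ^ (1 + 2*(ℓ:ℝ))) * (‖g (lam * s)‖ ^ (2:ℕ) * s ^ (1 + 2*(m:ℝ))) *
          ((1 + s) ^ (-(2*σ)) * (1 + r) ^ (-(2*σ))) := by ring
      _ ≤ (C₀ ^ 2 * lam ^ (-(1:ℝ)) * (1 + r) ^ (2*(ℓ:ℝ))) * (C₀ ^ 2 * lam ^ (-(1:ℝ)) * (1 + s) ^ (2*(m:ℝ))) *
          ((1 + s) ^ (-(2*σ)) * (1 + r) ^ (-(2*σ))) := by
          apply mul_le_mul_of_nonneg_right _ (by positivity)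
          exact mul_le_mul hF hG (by positivity) (by positivity)
      _ = C₀ ^ 4 * lam ^ (-(2:ℝ)) * ((1 + r) ^ (2*(ℓ:ℝ) - 2*σ) * (1 + s) ^ (2*(m:ℝ) - 2*σ)) := by
          rw [e2, e3, ← e1]; ring
      _ ≤ C₀ ^ 4 * lam ^ (-(2:ℝ)) *
          ((1 + r) ^ (2*(ℓ:ℝ) - 2*σ) * (1 + s) ^ (2*(m:ℝ) - 2*σ) +
            Set.indicator (Ioc r 1)
              (fun _ => r ^ (2*ν + 2*(α:ℝ) + 1 + 2*(ℓ:ℝ) + (1 + 2*(m:ℝ) - 2*ν - 2*(β:ℝ)))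
                + r ^ (2*(ℓ:ℝ) + 2*(m:ℝ)) + 2 * r ^ (2*ν + 2*(α:ℝ) + 1 + 2*(ℓ:ℝ))) s) := by
          exact mul_le_mul_of_nonneg_left (le_add_of_nonneg_right hind) (by positivity)
  · have hu1 : lam * r ≤ 1 := le_trans (mul_le_mul_of_nonneg_left hrs.le hlam0.le) hvs.le
    have hf2x := hf2 hu1
    have hg2x := hg2 hvs.le
    -- abbreviations for exponents
    set A : ℝ := 2*ν + 2*(α:ℝ) + 1 + 2*(ℓ:ℝ) with hAdef
    set B : ℝ := 1 + 2*(m:ℝ) - 2*ν - 2*(β:ℝ) with hBdef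
    have hs1' : s ≤ 1 := le_trans (le_mul_of_one_le_left hs0.le hlam) hvs.le
    have hrs1 : r ≤ 1 := le_trans hrs.le hs1'
    have hw1 : (1 + s) ^ (-(2*σ)) ≤ 1 :=
      Real.rpow_le_one_of_one_le_of_nonpos (by linarith) (by linarith)
    have hw2 : (1 + r) ^ (-(2*σ)) ≤ 1 :=
      Real.rpow_le_one_of_one_le_of_nonpos (by linarith) (by linarith)
    -- key identity
    have key : (lam * r) ^ (2*ν + 2*(α:ℝ)) * (lam * s) ^ (-(2*ν + 2*(β:ℝ))) *
        r ^ (1 + 2*(ℓ:ℝ)) * s ^ (1 + 2*(m:ℝ))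
        = lam ^ (2*(α:ℝ) - 2*(β:ℝ)) * (r ^ A * s ^ B) := by
      have m1 : r ^ A = r ^ (2*ν + 2*(α:ℝ)) * r ^ (1 + 2*(ℓ:ℝ)) := by
        rw [← Real.rpow_add hr]; congr 1; rw [hAdef]; ring
      have m2 : s ^ B = s ^ (-(2*ν + 2*(β:ℝ))) * s ^ (1 + 2*(m:ℝ)) := by
        rw [← Real.rpow_add hs0]; congr 1; rw [hBdef]; ring
      have m3 : lam ^ (2*(α:ℝ) - 2*(β:ℝ)) = lam ^ (2*ν + 2*(α:ℝ)) * lam ^ (-(2*ν + 2*(β:ℝ))) := by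
        rw [← Real.rpow_add hlam0]; congr 1; ring
      rw [Real.mul_rpow hlam0.le hr.le, Real.mul_rpow hlam0.le hs0.le, m1, m2, m3]; ring
    -- bound on the λ power
    have hsplit : lam ^ (2*(α:ℝ) - 2*(β:ℝ)) = lam ^ (-(2:ℝ)) * lam ^ (2*(α:ℝ) - 2*(β:ℝ) + 2) := by
      rw [← Real.rpow_add hlam0]; congr 1; ring
    have hcb : lam ^ (2*(α:ℝ) - 2*(β:ℝ) + 2) ≤ s ^ (-(2*(α:ℝ) - 2*(β:ℝ) + 2)) + 1 := by
      rcases le_or_gt (2*(α:ℝ) - 2*(β:ℝ) + 2) 0 with hc | hc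
      · have h1 : lam ^ (2*(α:ℝ) - 2*(β:ℝ) + 2) ≤ 1 :=
          Real.rpow_le_one_of_one_le_of_nonpos hlam hc
        have h2 : (0:ℝ) ≤ s ^ (-(2*(α:ℝ) - 2*(β:ℝ) + 2)) := Real.rpow_nonneg hs0.le _
        linarith
      · have hls : lam ≤ s⁻¹ := by
          rw [← one_div, le_div_iff₀ hs0]
          exact hvs.le
        have h1 : lam ^ (2*(α:ℝ) - 2*(β:ℝ) + 2) ≤ (s⁻¹) ^ (2*(α:ℝ) - 2*(β:ℝ) + 2) :=
          Real.rpow_le_rpow hlam0.le hls hc.le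
        have h2 : (s⁻¹) ^ (2*(α:ℝ) - 2*(β:ℝ) + 2) = s ^ (-(2*(α:ℝ) - 2*(β:ℝ) + 2)) := by
          rw [Real.inv_rpow hs0.le, ← Real.rpow_neg hs0.le]
        linarith [h1, h2.le, h2.ge]
    -- the r-power bound coming from r ≤ s ≤ 1
    have hbb : s ^ B * (s ^ (-(2*(α:ℝ) - 2*(β:ℝ) + 2)) + 1) ≤ (r ^ (B - (2*(α:ℝ) - 2*(β:ℝ) + 2)) + 1) + (r ^ B + 1) := by
      have q1 : s ^ B * s ^ (-(2*(α:ℝ) - 2*(β:ℝ) + 2)) = s ^ (B - (2*(α:ℝ) - 2*(β:ℝ) + 2)) := by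
        rw [← Real.rpow_add hs0]; ring_nf
      have q2 : s ^ (B - (2*(α:ℝ) - 2*(β:ℝ) + 2)) ≤ r ^ (B - (2*(α:ℝ) - 2*(β:ℝ) + 2)) + 1 := by
        rcases le_or_gt 0 (B - (2*(α:ℝ) - 2*(β:ℝ) + 2)) with he | he
        · have := Real.rpow_le_one hs0.le hs1' he
          have := Real.rpow_nonneg hr.le (B - (2*(α:ℝ) - 2*(β:ℝ) + 2))
          linarith
        · have := Real.rpow_le_rpow_of_nonpos hr hrs.le he.le
          linarith
      have q3 : s ^ B ≤ r ^ B + 1 := by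
        rcases le_or_gt 0 B with he | he
        · have := Real.rpow_le_one hs0.le hs1' he
          have := Real.rpow_nonneg hr.le B
          linarith
        · have := Real.rpow_le_rpow_of_nonpos hr hrs.le he.le
          linarith
      calc s ^ B * (s ^ (-(2*(α:ℝ) - 2*(β:ℝ) + 2)) + 1)
          = s ^ (B - (2*(α:ℝ) - 2*(β:ℝ) + 2)) + s ^ B := by rw [mul_add, mul_one, q1]
        _ ≤ _ := by gcongr
    -- auxiliary exponent identities
    have k2 : r ^ (A + B) = r ^ A * r ^ B := Real.rpow_add hr A B
    have k1 : r ^ (2*(ℓ:ℝ) + 2*(m:ℝ)) = r ^ A * r ^ (B - (2*(α:ℝ) - 2*(β:ℝ) + 2)) := by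
      rw [← Real.rpow_add hr]; congr 1; rw [hAdef, hBdef]; ring
    have hw12 : (1 + s) ^ (-(2*σ)) * (1 + r) ^ (-(2*σ)) ≤ 1 := by
      have := Real.rpow_nonneg hr1.le (-(2*σ))
      have := Real.rpow_nonneg hs1.le (-(2*σ))
      nlinarith
    calc ‖f (lam * r)‖ ^ (2 : ℕ) * ‖g (lam * s)‖ ^ (2 : ℕ) *
          r ^ (1 + 2 * (ℓ : ℝ)) * s ^ (1 + 2 * (m : ℝ)) *
            (1 + s) ^ (-(2 * σ)) * (1 + r) ^ (-(2 * σ))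
        = (‖f (lam * r)‖ ^ (2 : ℕ) * ‖g (lam * s)‖ ^ (2 : ℕ) *
            r ^ (1 + 2 * (ℓ : ℝ)) * s ^ (1 + 2 * (m : ℝ))) *
          ((1 + s) ^ (-(2 * σ)) * (1 + r) ^ (-(2 * σ))) := by ring
      _ ≤ (‖f (lam * r)‖ ^ (2 : ℕ) * ‖g (lam * s)‖ ^ (2 : ℕ) *
            r ^ (1 + 2 * (ℓ : ℝ)) * s ^ (1 + 2 * (m : ℝ))) * 1 :=
          mul_le_mul_of_nonneg_left hw12 (by positivity)
      _ = ‖f (lam * r)‖ ^ (2 : ℕ) * ‖g (lam * s)‖ ^ (2 : ℕ) *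
            r ^ (1 + 2 * (ℓ : ℝ)) * s ^ (1 + 2 * (m : ℝ)) := mul_one _
      _ ≤ (C₀ ^ 2 * (lam * r) ^ (2*ν + 2*(α:ℝ))) * (C₀ ^ 2 * (lam * s) ^ (-(2*ν + 2*(β:ℝ)))) *
            r ^ (1 + 2 * (ℓ : ℝ)) * s ^ (1 + 2 * (m : ℝ)) := by
          have h1 := mul_le_mul hf2x hg2x (by positivity) (by positivity)
          exact mul_le_mul_of_nonneg_right
            (mul_le_mul_of_nonneg_right h1 (Real.rpow_nonneg hr.le _))
            (Real.rpow_nonneg hs0.le _)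
      _ = C₀ ^ 4 * ((lam * r) ^ (2*ν + 2*(α:ℝ)) * (lam * s) ^ (-(2*ν + 2*(β:ℝ))) *
            r ^ (1 + 2 * (ℓ : ℝ)) * s ^ (1 + 2 * (m : ℝ))) := by ring
      _ = C₀ ^ 4 * (lam ^ (2*(α:ℝ) - 2*(β:ℝ)) * (r ^ A * s ^ B)) := by rw [key]
      _ = C₀ ^ 4 * lam ^ (-(2:ℝ)) * (lam ^ (2*(α:ℝ) - 2*(β:ℝ) + 2) * (r ^ A * s ^ B)) := by
          rw [hsplit]; ring
      _ ≤ C₀ ^ 4 * lam ^ (-(2:ℝ)) * ((s ^ (-(2*(α:ℝ) - 2*(β:ℝ) + 2)) + 1) * (r ^ A * s ^ B)) :=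
          mul_le_mul_of_nonneg_left (mul_le_mul_of_nonneg_right hcb (by positivity)) (by positivity)
      _ = C₀ ^ 4 * lam ^ (-(2:ℝ)) * (r ^ A * (s ^ B * (s ^ (-(2*(α:ℝ) - 2*(β:ℝ) + 2)) + 1))) := by
          ring
      _ ≤ C₀ ^ 4 * lam ^ (-(2:ℝ)) *
            (r ^ A * ((r ^ (B - (2*(α:ℝ) - 2*(β:ℝ) + 2)) + 1) + (r ^ B + 1))) :=
          mul_le_mul_of_nonneg_left (mul_le_mul_of_nonneg_left hbb (by positivity)) (by positivity)
      _ = C₀ ^ 4 * lam ^ (-(2:ℝ)) * (r ^ (A + B) + r ^ (2*(ℓ:ℝ) + 2*(m:ℝ)) + 2 * r ^ A) := by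
          rw [k2, k1]; ring
      _ ≤ C₀ ^ 4 * lam ^ (-(2 : ℝ)) *
        ((1 + r) ^ (2 * (ℓ:ℝ) - 2 * σ) * (1 + s) ^ (2 * (m:ℝ) - 2 * σ) +
          Set.indicator (Ioc r 1)
            (fun _ => r ^ (A + B) + r ^ (2*(ℓ:ℝ) + 2*(m:ℝ)) + 2 * r ^ A) s) := by
          rw [Set.indicator_of_mem (show s ∈ Ioc r 1 from ⟨hrs, hs1'⟩)]
          have t1 : 0 ≤ (1 + r) ^ (2 * (ℓ:ℝ) - 2 * σ) * (1 + s) ^ (2 * (m:ℝ) - 2 * σ) := by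
            positivity
          exact mul_le_mul_of_nonneg_left (le_add_of_nonneg_left t1) (by positivity)

set_option maxHeartbeats 1000000 in
theorem resolvent_kernel_weighted_L2L2_bound
    (n : ℕ) (hn : 3 ≤ n) (ν : ℝ) (hν : ((n : ℝ) - 2) / 2 ≤ ν)
    (ℓ m : ℕ) (α β : ℤ) (hα : |α| ≤ (ℓ : ℤ)) (hβ : |β| ≤ (m : ℤ))
    (σ : ℝ) (hσ : 1 / 2 + ((ℓ : ℝ) + (m : ℝ)) < σ)
    (f g : ℝ → ℂ) (hf : Measurable f) (hg : Measurable g)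
    (C₀ : ℝ) (hC₀ : 0 < C₀)
    (hf_small : ∀ τ : ℝ, 0 < τ → τ ≤ 1 → ‖f τ‖ ≤ C₀ * τ ^ (ν + (α : ℝ)))
    (hf_large : ∀ τ : ℝ, 1 ≤ τ → ‖f τ‖ ≤ C₀ * τ ^ (-(1 : ℝ) / 2))
    (hg_small : ∀ τ : ℝ, 0 < τ → τ ≤ 1 → ‖g τ‖ ≤ C₀ * τ ^ (-(ν + (β : ℝ))))
    (hg_large : ∀ τ : ℝ, 1 ≤ τ → ‖g τ‖ ≤ C₀ * τ ^ (-(1 : ℝ) / 2)) :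
    ∃ C > (0 : ℝ), ∀ lam : ℝ, 1 ≤ lam →
      (∫ r in Ioi (0 : ℝ), ∫ s in Ioi r,
          ‖f (lam * r)‖ ^ (2 : ℕ) * ‖g (lam * s)‖ ^ (2 : ℕ) *
            r ^ (1 + 2 * (ℓ : ℝ)) * s ^ (1 + 2 * (m : ℝ)) *
              (1 + s) ^ (-(2 * σ)) * (1 + r) ^ (-(2 * σ)))
        ≤ C * lam ^ (-(2 : ℝ)) := by
  have hℓ0 : (0:ℝ) ≤ (ℓ:ℝ) := Nat.cast_nonneg ℓ
  have hm0 : (0:ℝ) ≤ (m:ℝ) := Nat.cast_nonneg m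
  have hn3 : (3:ℝ) ≤ (n:ℝ) := by exact_mod_cast hn
  have hν1 : (1:ℝ) ≤ 2 * ν := by linarith
  obtain ⟨hα1, hα2⟩ := abs_le.mp hα
  obtain ⟨hβ1, hβ2⟩ := abs_le.mp hβ
  have hα1' : -(ℓ:ℝ) ≤ (α:ℝ) := by exact_mod_cast hα1
  have hβ2' : (β:ℝ) ≤ (m:ℝ) := by exact_mod_cast hβ2
  have hσ0 : (0:ℝ) ≤ σ := by linarith
  -- exponents
  set A : ℝ := 2*ν + 2*(α:ℝ) + 1 + 2*(ℓ:ℝ) with hAdef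
  set B : ℝ := 1 + 2*(m:ℝ) - 2*ν - 2*(β:ℝ) with hBdef
  set p : ℝ := 2*(m:ℝ) - 2*σ with hpdef
  set q : ℝ := 2*(ℓ:ℝ) - 2*σ with hqdef
  have heA : (-1:ℝ) < A := by rw [hAdef]; linarith
  have heAB : (-1:ℝ) < A + B := by rw [hAdef, hBdef]; linarith
  have heLM : (-1:ℝ) < 2*(ℓ:ℝ) + 2*(m:ℝ) := by linarith
  have hp1 : p < -1 := by rw [hpdef]; linarith
  have hq1 : q < -1 := by rw [hqdef]; linarith
  set K : ℝ → ℝ := fun r => r ^ (A + B) + r ^ (2*(ℓ:ℝ) + 2*(m:ℝ)) + 2 * r ^ A with hKdef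
  have hKint : IntegrableOn K (Ioc (0:ℝ) 1) :=
    ((rk_int_K' heAB).add (rk_int_K' heLM)).add ((rk_int_K' heA).const_mul 2)
  have hPint : IntegrableOn (fun s : ℝ => (1+s) ^ p) (Ioi (0:ℝ)) := rk_int_one_add' hp1
  have hQint : IntegrableOn (fun r : ℝ => (1+r) ^ q) (Ioi (0:ℝ)) := rk_int_one_add' hq1
  set I₁ : ℝ := ∫ s in Ioi (0:ℝ), (1+s) ^ p with hI1def
  set I₂ : ℝ := ∫ r in Ioi (0:ℝ), (1+r) ^ q with hI2def
  set I₃ : ℝ := ∫ r in Ioc (0:ℝ) 1, K r with hI3def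
  have hI₁0 : 0 ≤ I₁ :=
    setIntegral_nonneg measurableSet_Ioi (fun x hx => Real.rpow_nonneg (by
      have : (0:ℝ) < x := hx; linarith) _)
  have hI₂0 : 0 ≤ I₂ :=
    setIntegral_nonneg measurableSet_Ioi (fun x hx => Real.rpow_nonneg (by
      have : (0:ℝ) < x := hx; linarith) _)
  have hI₃0 : 0 ≤ I₃ :=
    setIntegral_nonneg measurableSet_Ioc (fun x hx => by
      have hx0 : (0:ℝ) < x := hx.1
      simp only [hKdef]
      positivity)
  have hC1 : (0:ℝ) ≤ I₁ * I₂ + I₃ := add_nonneg (mul_nonneg hI₁0 hI₂0) hI₃0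
  have hCpos : (0:ℝ) < C₀^4 * (I₁ * I₂ + I₃) + 1 := by
    have := mul_nonneg (le_of_lt (pow_pos hC₀ 4)) hC1
    linarith
  refine ⟨C₀^4 * (I₁ * I₂ + I₃) + 1, hCpos, ?_⟩
  intro lam hlam
  have hlam0 : (0:ℝ) < lam := lt_of_lt_of_le one_pos hlam
  have hlam2 : (0:ℝ) < lam ^ (-(2:ℝ)) := Real.rpow_pos_of_pos hlam0 _
  -- outer dominating function
  set Ψ : ℝ → ℝ := fun r =>
    C₀^4 * lam ^ (-(2:ℝ)) * ((1+r) ^ q * I₁ + Set.indicator (Ioc (0:ℝ) 1) K r) with hΨdef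
  have hindint : Integrable (Set.indicator (Ioc (0:ℝ) 1) K) :=
    (integrable_indicator_iff measurableSet_Ioc).2 hKint
  have hΨint : IntegrableOn Ψ (Ioi (0:ℝ)) := by
    refine (((hQint.mul_const I₁).add hindint.integrableOn).const_mul _)
  -- value of the integral of Ψ
  have hΨval : ∫ r in Ioi (0:ℝ), Ψ r = C₀^4 * lam ^ (-(2:ℝ)) * (I₂ * I₁ + I₃) := by
    simp only [hΨdef]
    rw [integral_const_mul]
    congr 1
    rw [integral_add (hQint.mul_const I₁) hindint.integrableOn, integral_mul_const]
    congr 1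
    rw [integral_indicator measurableSet_Ioc, Measure.restrict_restrict measurableSet_Ioc,
      Set.inter_eq_self_of_subset_left Set.Ioc_subset_Ioi_self]
  -- outer comparison
  have houter : (∫ r in Ioi (0 : ℝ), ∫ s in Ioi r,
          ‖f (lam * r)‖ ^ (2 : ℕ) * ‖g (lam * s)‖ ^ (2 : ℕ) *
            r ^ (1 + 2 * (ℓ : ℝ)) * s ^ (1 + 2 * (m : ℝ)) *
              (1 + s) ^ (-(2 * σ)) * (1 + r) ^ (-(2 * σ)))
        ≤ ∫ r in Ioi (0:ℝ), Ψ r := by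
    refine integral_mono_of_nonneg ?_ hΨint ?_
    · filter_upwards [ae_restrict_mem measurableSet_Ioi] with r hr
      have hr0 : (0:ℝ) < r := hr
      refine setIntegral_nonneg measurableSet_Ioi (fun s hs => ?_)
      have hs0 : (0:ℝ) < s := lt_trans hr0 hs
      positivity
    · filter_upwards [ae_restrict_mem measurableSet_Ioi] with r hr
      have hr0 : (0:ℝ) < r := hr
      have hr1 : (0:ℝ) < 1 + r := by linarith
      -- inner dominating function
      have t1 : IntegrableOn (fun s : ℝ => (1+r) ^ q * (1+s) ^ p) (Ioi r) :=
        (hPint.mono_set (Ioi_subset_Ioi hr0.le)).const_mul _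
      have t2 : IntegrableOn (Set.indicator (Ioc r 1) (fun _ => K r)) (Ioi r) := by
        refine ((integrable_indicator_iff measurableSet_Ioc).2 ?_).integrableOn
        exact integrableOn_const measure_Ioc_lt_top.ne
      have tD : IntegrableOn (fun s : ℝ => C₀^4 * lam ^ (-(2:ℝ)) *
          ((1+r) ^ q * (1+s) ^ p + Set.indicator (Ioc r 1) (fun _ => K r) s)) (Ioi r) :=
        (t1.add t2).const_mul _
      -- pointwise bound (uses rk_pointwise, to be inserted)
      have hpt : ∀ s ∈ Ioi r,
          ‖f (lam * r)‖ ^ (2 : ℕ) * ‖g (lam * s)‖ ^ (2 : ℕ) *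
            r ^ (1 + 2 * (ℓ : ℝ)) * s ^ (1 + 2 * (m : ℝ)) *
              (1 + s) ^ (-(2 * σ)) * (1 + r) ^ (-(2 * σ)) ≤
          C₀^4 * lam ^ (-(2:ℝ)) *
            ((1+r) ^ q * (1+s) ^ p + Set.indicator (Ioc r 1) (fun _ => K r) s) := by
        intro s hs
        have hbd := rk_pointwise ν ℓ m α β σ hν1 hα1' hσ0 f g C₀ hC₀
          hf_small hf_large hg_small hg_large lam r s hlam hr0 hs
        simp only [hpdef, hqdef, hKdef, hAdef, hBdef]
        convert hbd using 3
      have step1 : (∫ s in Ioi r,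
          ‖f (lam * r)‖ ^ (2 : ℕ) * ‖g (lam * s)‖ ^ (2 : ℕ) *
            r ^ (1 + 2 * (ℓ : ℝ)) * s ^ (1 + 2 * (m : ℝ)) *
              (1 + s) ^ (-(2 * σ)) * (1 + r) ^ (-(2 * σ)))
          ≤ ∫ s in Ioi r, C₀^4 * lam ^ (-(2:ℝ)) *
            ((1+r) ^ q * (1+s) ^ p + Set.indicator (Ioc r 1) (fun _ => K r) s) := by
        refine integral_mono_of_nonneg ?_ tD ?_
        · filter_upwards [ae_restrict_mem measurableSet_Ioi] with s hs
          have hs0 : (0:ℝ) < s := lt_trans hr0 hs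
          positivity
        · filter_upwards [ae_restrict_mem measurableSet_Ioi] with s hs
          exact hpt s hs
      have step2 : (∫ s in Ioi r, C₀^4 * lam ^ (-(2:ℝ)) *
            ((1+r) ^ q * (1+s) ^ p + Set.indicator (Ioc r 1) (fun _ => K r) s)) ≤ Ψ r := by
        rw [integral_const_mul, integral_add t1 t2, integral_const_mul]
        have e1 : (∫ s in Ioi r, (1+s) ^ p) ≤ I₁ := by
          refine setIntegral_mono_set hPint ?_ (HasSubset.Subset.eventuallyLE (Ioi_subset_Ioi hr0.le))
          filter_upwards [ae_restrict_mem measurableSet_Ioi] with s hs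
          have hs0 : (0:ℝ) < s := hs
          positivity
        have e2 : (∫ s in Ioi r, Set.indicator (Ioc r 1) (fun _ => K r) s)
            ≤ Set.indicator (Ioc (0:ℝ) 1) K r := by
          rw [integral_indicator measurableSet_Ioc, Measure.restrict_restrict measurableSet_Ioc,
            Set.inter_eq_self_of_subset_left Set.Ioc_subset_Ioi_self, setIntegral_const,
            measureReal_def, Real.volume_Ioc, smul_eq_mul]
          have hK0 : 0 ≤ K r := by simp only [hKdef]; positivity
          rcases le_or_gt r 1 with hcase | hcase
          · rw [Set.indicator_of_mem (show r ∈ Ioc (0:ℝ) 1 from ⟨hr0, hcase⟩),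
              ENNReal.toReal_ofReal (by linarith : (0:ℝ) ≤ 1 - r)]
            nlinarith
          · rw [ENNReal.ofReal_eq_zero.2 (by linarith : 1 - r ≤ 0)]
            simp only [ENNReal.toReal_zero, zero_mul]
            exact Set.indicator_nonneg (fun x hx => by
              have hx0 : (0:ℝ) < x := hx.1
              simp only [hKdef]; positivity) r
        have hq0 : 0 ≤ (1+r) ^ q := Real.rpow_nonneg hr1.le _
        simp only [hΨdef]
        have := add_le_add (mul_le_mul_of_nonneg_left e1 hq0) e2
        exact mul_le_mul_of_nonneg_left this (by positivity)
      exact le_trans step1 step2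
  calc _ ≤ ∫ r in Ioi (0:ℝ), Ψ r := houter
    _ = C₀^4 * lam ^ (-(2:ℝ)) * (I₂ * I₁ + I₃) := hΨval
    _ ≤ (C₀^4 * (I₁ * I₂ + I₃) + 1) * lam ^ (-(2:ℝ)) := by nlinarith [pow_pos hC₀ 4]
end
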